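/- arXiv:1407.2758 — 7 statements merged into one kernel-verified Lean document; each statement's English description precedes it below -/
import Mathlib

section
/- Let N be a positive integer and let P_i, P_o ∈ (0,1). Define, for 0 ≤ r ≤ k, μ(r,k) = C(k,r) P_o^r (1−P_o)^(k−r), and for 0 ≤ m ≤ n, ν(m,n) = C(n,m) P_i^m (1−P_i)^(n−m). Define the transition probabilities p_{kj} = Σ_{r = max(0, k−j)}^{min(k, N−j)} μ(r,k) · ν(j+r−k, N−k) for 0 ≤ k, j ≤ N. Set η = P_i/(P_i+P_o) and π_j = C(N,j) η^j (1−η)^(N−j). Then π is a stationary distribution of this Markov chain, i.e., Σ_{k=0}^{N} π_k p_{kj} = π_j for every 0 ≤ j ≤ N. -/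
open Finset

lemma trinom_choose (N j s r : ℕ) (hj : j ≤ N) (hs : s ≤ j) (hr : r ≤ N - j) :
    N.choose (s + r) * (s + r).choose r * ((N - (s + r)).choose (j - s)) =
    N.choose j * j.choose s * ((N - j).choose r) := by
  have h1 : (s + r).choose r * Nat.factorial r * Nat.factorial s = (s + r).factorial := by
    have := Nat.choose_mul_factorial_mul_factorial (Nat.le_add_left r s)
    simpa using this
  have e1 : N - (s + r) - (j - s) = N - j - r := by omega
  have h2 : (N - (s + r)).choose (j - s) * Nat.factorial (j - s) * Nat.factorial (N - j - r)
      = (N - (s + r)).factorial := by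
    have hle : j - s ≤ N - (s + r) := by omega
    have := Nat.choose_mul_factorial_mul_factorial hle
    rwa [e1] at this
  have h3 : N.choose (s + r) * Nat.factorial (s + r) * Nat.factorial (N - (s + r))
      = N.factorial := Nat.choose_mul_factorial_mul_factorial (by omega)
  have h4 : j.choose s * Nat.factorial s * Nat.factorial (j - s) = j.factorial :=
    Nat.choose_mul_factorial_mul_factorial hs
  have h5 : (N - j).choose r * Nat.factorial r * Nat.factorial (N - j - r)
      = (N - j).factorial := Nat.choose_mul_factorial_mul_factorial (by omega)
  have h6 : N.choose j * Nat.factorial j * Nat.factorial (N - j) = N.factorial :=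
    Nat.choose_mul_factorial_mul_factorial hj
  apply Nat.eq_of_mul_eq_mul_right
    (show 0 < Nat.factorial r * Nat.factorial s *
      (Nat.factorial (j - s) * Nat.factorial (N - j - r)) from by positivity)
  calc N.choose (s + r) * (s + r).choose r * ((N - (s + r)).choose (j - s)) *
        (Nat.factorial r * Nat.factorial s * (Nat.factorial (j - s) * Nat.factorial (N - j - r)))
      = N.choose (s + r) * ((s + r).choose r * Nat.factorial r * Nat.factorial s) *
        ((N - (s + r)).choose (j - s) * Nat.factorial (j - s) * Nat.factorial (N - j - r)) := by
        ring
    _ = N.choose (s + r) * Nat.factorial (s + r) * Nat.factorial (N - (s + r)) := by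
        rw [h1, h2]
    _ = N.factorial := h3
    _ = N.choose j * Nat.factorial j * Nat.factorial (N - j) := h6.symm
    _ = N.choose j * (j.choose s * Nat.factorial s * Nat.factorial (j - s)) *
        ((N - j).choose r * Nat.factorial r * Nat.factorial (N - j - r)) := by
        rw [h4, h5]
    _ = N.choose j * j.choose s * ((N - j).choose r) *
        (Nat.factorial r * Nat.factorial s * (Nat.factorial (j - s) * Nat.factorial (N - j - r))) := by
        ring

/-- Theorem 1 (existence part): the Binomial(N, P_i/(P_i+P_o)) distribution is a
stationary distribution of the Markov chain of the number of users in a small cell. -/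
theorem binomial_is_stationary
    (N : ℕ) (hN : 0 < N) (Pin Pout : ℝ)
    (hPin : Pin ∈ Set.Ioo (0 : ℝ) 1) (hPout : Pout ∈ Set.Ioo (0 : ℝ) 1)
    (μ ν : ℕ → ℕ → ℝ) (p : ℕ → ℕ → ℝ) (η : ℝ) (π : ℕ → ℝ)
    (hμ : ∀ r k, μ r k = (Nat.choose k r : ℝ) * Pout ^ r * (1 - Pout) ^ (k - r))
    (hν : ∀ m n, ν m n = (Nat.choose n m : ℝ) * Pin ^ m * (1 - Pin) ^ (n - m))
    (hp : ∀ k j, p k j =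
      ∑ r ∈ Finset.Icc (k - j) (min k (N - j)), μ r k * ν (j + r - k) (N - k))
    (hη : η = Pin / (Pin + Pout))
    (hπ : ∀ j, π j = (Nat.choose N j : ℝ) * η ^ j * (1 - η) ^ (N - j)) :
    ∀ j ≤ N, ∑ k ∈ Finset.range (N + 1), π k * p k j = π j := by
  intro j hj
  have hS : (0 : ℝ) < Pin + Pout := by
    have := hPin.1; have := hPout.1; linarith
  have hA : η * (1 - Pout) + (1 - η) * Pin = η := by
    rw [hη]; field_simp; ring
  have hB : η * Pout + (1 - η) * (1 - Pin) = 1 - η := by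
    rw [hη]; field_simp; ring
  -- the factored summand
  set G : ℕ → ℕ → ℝ := fun s r =>
    (Nat.choose N j : ℝ) *
      ((Nat.choose j s : ℝ) * (η * (1 - Pout)) ^ s * ((1 - η) * Pin) ^ (j - s)) *
      ((Nat.choose (N - j) r : ℝ) * (η * Pout) ^ r * ((1 - η) * (1 - Pin)) ^ (N - j - r))
    with hG
  have key : ∀ s r : ℕ, s ≤ j → r ≤ N - j →
      π (s + r) * (μ r (s + r) * ν (j + r - (s + r)) (N - (s + r))) = G s r := by
    intro s r hs hr
    rw [hπ, hμ, hν, hG]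
    have e1 : j + r - (s + r) = j - s := by omega
    have e2 : s + r - r = s := by omega
    have e3 : N - (s + r) - (j - s) = N - j - r := by omega
    have e4 : N - (s + r) = (j - s) + (N - j - r) := by omega
    rw [e1, e2, e3, e4]
    simp only [hG]
    have hc : ((N.choose (s + r) : ℝ) * ((s + r).choose r : ℝ) *
        (((N - (s + r)).choose (j - s) : ℝ))) =
        (N.choose j : ℝ) * (j.choose s : ℝ) * ((N - j).choose r : ℝ) := by
      exact_mod_cast trinom_choose N j s r hj hs hr
    rw [e4] at hc
    rw [pow_add η s r, pow_add (1 - η) (j - s) (N - j - r),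
      mul_pow, mul_pow, mul_pow, mul_pow]
    linear_combination (η ^ s * η ^ r * (1 - η) ^ (j - s) * (1 - η) ^ (N - j - r) *
      Pout ^ r * (1 - Pout) ^ s * Pin ^ (j - s) * (1 - Pin) ^ (N - j - r)) * hc
  calc ∑ k ∈ Finset.range (N + 1), π k * p k j
      = ∑ k ∈ Finset.range (N + 1), ∑ r ∈ Finset.Icc (k - j) (min k (N - j)),
          π k * (μ r k * ν (j + r - k) (N - k)) := by
        refine Finset.sum_congr rfl fun k _ => ?_
        rw [hp, Finset.mul_sum]
    _ = ∑ x ∈ (Finset.range (N + 1)).sigma (fun k => Finset.Icc (k - j) (min k (N - j))),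
          π x.1 * (μ x.2 x.1 * ν (j + x.2 - x.1) (N - x.1)) := by
        rw [Finset.sum_sigma]
    _ = ∑ x ∈ (Finset.range (j + 1)).sigma (fun _ => Finset.range (N - j + 1)),
          G x.1 x.2 := by
        refine Finset.sum_nbij' (fun x => ⟨x.1 - x.2, x.2⟩) (fun x => ⟨x.1 + x.2, x.2⟩)
          ?_ ?_ ?_ ?_ ?_
        · rintro ⟨k, r⟩ hx
          simp only [Finset.mem_sigma, Finset.mem_range, Finset.mem_Icc, le_min_iff] at hx ⊢
          omega
        · rintro ⟨s, r⟩ hx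
          simp only [Finset.mem_sigma, Finset.mem_range, Finset.mem_Icc, le_min_iff] at hx ⊢
          omega
        · rintro ⟨k, r⟩ hx
          simp only [Finset.mem_sigma, Finset.mem_range, Finset.mem_Icc, le_min_iff] at hx
          simp only [Sigma.mk.inj_iff, heq_eq_eq, and_true]
          omega
        · rintro ⟨s, r⟩ hx
          simp only [Finset.mem_sigma, Finset.mem_range, Finset.mem_Icc, le_min_iff] at hx
          simp only [Sigma.mk.inj_iff, heq_eq_eq, and_true]
          omega
        · rintro ⟨k, r⟩ hx
          simp only [Finset.mem_sigma, Finset.mem_range, Finset.mem_Icc, le_min_iff] at hx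
          obtain ⟨s, rfl⟩ : ∃ s, k = s + r := ⟨k - r, by omega⟩
          simp only [Nat.add_sub_cancel]
          exact key s r (by omega) (by omega)
    _ = ∑ s ∈ Finset.range (j + 1), ∑ r ∈ Finset.range (N - j + 1), G s r := by
        rw [Finset.sum_sigma]
    _ = (Nat.choose N j : ℝ) *
          ((∑ s ∈ Finset.range (j + 1),
            (Nat.choose j s : ℝ) * (η * (1 - Pout)) ^ s * ((1 - η) * Pin) ^ (j - s)) *
           (∑ r ∈ Finset.range (N - j + 1),
            (Nat.choose (N - j) r : ℝ) * (η * Pout) ^ r * ((1 - η) * (1 - Pin)) ^ (N - j - r))) := by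
        have hfact := Finset.sum_mul_sum (Finset.range (j + 1)) (Finset.range (N - j + 1))
          (fun s => (Nat.choose j s : ℝ) * (η * (1 - Pout)) ^ s * ((1 - η) * Pin) ^ (j - s))
          (fun r => (Nat.choose (N - j) r : ℝ) * (η * Pout) ^ r *
            ((1 - η) * (1 - Pin)) ^ (N - j - r))
        rw [hfact, Finset.mul_sum]
        refine Finset.sum_congr rfl fun s _ => ?_
        rw [Finset.mul_sum]
        refine Finset.sum_congr rfl fun r _ => ?_
        simp only [hG]; ring
    _ = (Nat.choose N j : ℝ) *
          ((η * (1 - Pout) + (1 - η) * Pin) ^ j *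
           (η * Pout + (1 - η) * (1 - Pin)) ^ (N - j)) := by
        rw [add_pow, add_pow]
        congr 1
        congr 1 <;> refine Finset.sum_congr rfl fun i _ => by ring
    _ = π j := by rw [hA, hB, hπ]; ring
end

section
/- Let N be a positive integer, P_i, P_o ∈ (0,1), μ(r,k) = C(k,r) P_o^r (1−P_o)^(k−r), ν(m,n) = C(n,m) P_i^m (1−P_i)^(n−m), and p_{kj} = Σ_{r = max(0, k−j)}^{min(k, N−j)} μ(r,k) ν(j+r−k, N−k). Suppose π = (π_0,…,π_N) is a probability vector (π_j ≥ 0, Σ_j π_j = 1) satisfying Σ_{k=0}^{N} π_k p_{kj} = π_j for all j. Then its probability generating function ξ(z) = Σ_{j=0}^{N} π_j z^j satisfies the functional equation ξ(z) = (P_i z + 1 − P_i)^N · ξ((P_o + (1−P_o) z) / (P_i z + 1 − P_i)) for every real z with P_i z + 1 − P_i ≠ 0. -/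
open Finset

/-- Key step in the proof of Theorem 1: the probability generating function of any
stationary distribution of the Markov chain of the number of users in a small cell
satisfies the functional equation
`ξ(z) = (P_i z + 1 − P_i)^N ξ((P_o + (1−P_o) z)/(P_i z + 1 − P_i))`. -/
theorem stationary_pgf_functional_equation
    (N : ℕ) (hN : 0 < N) (Pin Pout : ℝ)
    (hPin : Pin ∈ Set.Ioo (0 : ℝ) 1) (hPout : Pout ∈ Set.Ioo (0 : ℝ) 1)
    (μ ν : ℕ → ℕ → ℝ) (p : ℕ → ℕ → ℝ) (π : ℕ → ℝ) (ξ : ℝ → ℝ)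
    (hμ : ∀ r k, μ r k = (Nat.choose k r : ℝ) * Pout ^ r * (1 - Pout) ^ (k - r))
    (hν : ∀ m n, ν m n = (Nat.choose n m : ℝ) * Pin ^ m * (1 - Pin) ^ (n - m))
    (hp : ∀ k j, p k j =
      ∑ r ∈ Finset.Icc (k - j) (min k (N - j)), μ r k * ν (j + r - k) (N - k))
    (hπnonneg : ∀ j, 0 ≤ π j)
    (hπsum : ∑ j ∈ Finset.range (N + 1), π j = 1)
    (hstat : ∀ j ≤ N, ∑ k ∈ Finset.range (N + 1), π k * p k j = π j)
    (hξ : ∀ z : ℝ, ξ z = ∑ j ∈ Finset.range (N + 1), π j * z ^ j) :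
    ∀ z : ℝ, Pin * z + 1 - Pin ≠ 0 →
      ξ z = (Pin * z + 1 - Pin) ^ N *
        ξ ((Pout + (1 - Pout) * z) / (Pin * z + 1 - Pin)) := by
  intro z hz
  set a : ℝ := Pout + (1 - Pout) * z with ha
  set b : ℝ := Pin * z + 1 - Pin with hb
  -- key combinatorial identity
  have key : ∀ k ≤ N, ∑ j ∈ Finset.range (N + 1), p k j * z ^ j
      = a ^ k * b ^ (N - k) := by
    intro k hk
    have h1 : ∑ j ∈ Finset.range (N + 1), p k j * z ^ j
        = ∑ x ∈ (Finset.range (N + 1)).sigma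
            (fun j => Finset.Icc (k - j) (min k (N - j))),
            μ x.2 k * ν (x.1 + x.2 - k) (N - k) * z ^ x.1 := by
      rw [Finset.sum_sigma]
      refine Finset.sum_congr rfl fun j hj => ?_
      rw [hp, Finset.sum_mul]
    have h2 : ∑ x ∈ (Finset.range (N + 1)).sigma
            (fun j => Finset.Icc (k - j) (min k (N - j))),
            μ x.2 k * ν (x.1 + x.2 - k) (N - k) * z ^ x.1
        = ∑ y ∈ (Finset.range (k + 1)) ×ˢ (Finset.range (N - k + 1)),
            μ y.1 k * ν y.2 (N - k) * z ^ (k - y.1 + y.2) := by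
      refine Finset.sum_nbij' (fun x => (x.2, x.1 + x.2 - k))
        (fun y => ⟨k - y.1 + y.2, y.1⟩) ?_ ?_ ?_ ?_ ?_
      · rintro ⟨j, r⟩ hx
        simp only [Finset.mem_sigma, Finset.mem_range, Finset.mem_Icc,
          le_min_iff] at hx
        simp only [Finset.mem_product, Finset.mem_range]
        omega
      · rintro ⟨r, m⟩ hy
        simp only [Finset.mem_product, Finset.mem_range] at hy
        simp only [Finset.mem_sigma, Finset.mem_range, Finset.mem_Icc, le_min_iff]
        omega
      · rintro ⟨j, r⟩ hx
        simp only [Finset.mem_sigma, Finset.mem_range, Finset.mem_Icc,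
          le_min_iff] at hx
        simp only [Sigma.mk.inj_iff, heq_eq_eq]
        exact ⟨by omega, trivial⟩
      · rintro ⟨r, m⟩ hy
        simp only [Finset.mem_product, Finset.mem_range] at hy
        simp only [Prod.mk.injEq]
        exact ⟨trivial, by omega⟩
      · rintro ⟨j, r⟩ hx
        simp only [Finset.mem_sigma, Finset.mem_range, Finset.mem_Icc,
          le_min_iff] at hx
        have h3 : k - r + (j + r - k) = j := by omega
        simp [h3]
    have h4 : ∑ y ∈ (Finset.range (k + 1)) ×ˢ (Finset.range (N - k + 1)),
            μ y.1 k * ν y.2 (N - k) * z ^ (k - y.1 + y.2)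
        = (∑ r ∈ Finset.range (k + 1), μ r k * z ^ (k - r)) *
          (∑ m ∈ Finset.range (N - k + 1), ν m (N - k) * z ^ m) := by
      rw [Finset.sum_mul_sum, Finset.sum_product]
      refine Finset.sum_congr rfl fun r hr => Finset.sum_congr rfl fun m hm => ?_
      rw [pow_add]; ring
    have h5 : ∑ r ∈ Finset.range (k + 1), μ r k * z ^ (k - r) = a ^ k := by
      rw [ha, add_pow]
      refine Finset.sum_congr rfl fun r hr => ?_
      rw [hμ, mul_pow]; ring
    have h6 : ∑ m ∈ Finset.range (N - k + 1), ν m (N - k) * z ^ m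
        = b ^ (N - k) := by
      have hb' : b = Pin * z + (1 - Pin) := by rw [hb]; ring
      rw [hb', add_pow]
      refine Finset.sum_congr rfl fun m hm => ?_
      rw [hν, mul_pow]; ring
    rw [h1, h2, h4, h5, h6]
  -- put things together
  have hξz : ξ z = ∑ k ∈ Finset.range (N + 1), π k * (a ^ k * b ^ (N - k)) := by
    calc ξ z = ∑ j ∈ Finset.range (N + 1), π j * z ^ j := hξ z
      _ = ∑ j ∈ Finset.range (N + 1),
            ∑ k ∈ Finset.range (N + 1), π k * p k j * z ^ j := by
          refine Finset.sum_congr rfl fun j hj => ?_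
          rw [← Finset.sum_mul, hstat j (Nat.lt_succ_iff.mp (Finset.mem_range.mp hj))]
      _ = ∑ k ∈ Finset.range (N + 1),
            ∑ j ∈ Finset.range (N + 1), π k * p k j * z ^ j := Finset.sum_comm
      _ = ∑ k ∈ Finset.range (N + 1), π k * (a ^ k * b ^ (N - k)) := by
          refine Finset.sum_congr rfl fun k hk => ?_
          rw [← key k (Nat.lt_succ_iff.mp (Finset.mem_range.mp hk)), Finset.mul_sum]
          exact Finset.sum_congr rfl fun j hj => by ring
  rw [hξz, hξ (a / b), Finset.mul_sum]
  refine Finset.sum_congr rfl fun k hk => ?_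
  have hk' : k ≤ N := Nat.lt_succ_iff.mp (Finset.mem_range.mp hk)
  have hbN : (b : ℝ) ^ N = b ^ k * b ^ (N - k) := by
    rw [← pow_add]; congr 1; omega
  rw [div_pow, hbN]
  field_simp [pow_ne_zero _ hz]
end

section
/- Let N be a positive integer, P_i, P_o ∈ (0,1), μ(r,k) = C(k,r) P_o^r (1−P_o)^(k−r), ν(m,n) = C(n,m) P_i^m (1−P_i)^(n−m), and p_{kj} = Σ_{r = max(0, k−j)}^{min(k, N−j)} μ(r,k) ν(j+r−k, N−k). If π = (π_0,…,π_N) is a probability vector satisfying Σ_{k=0}^N π_k p_{kj} = π_j for all 0 ≤ j ≤ N, then π is the Binomial(N, η) distribution with η = P_i/(P_i+P_o); that is, π_j = C(N,j) η^j (1−η)^(N−j) for every j. -/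
open Finset Nat

lemma choose4 (s c u d : ℕ) :
    ((s+c+u+d).choose (s+u) * ((s+u).choose u) * ((c+d).choose c) : ℝ)
    = ((s+c+u+d).choose (s+c)) * ((s+c).choose s) * ((u+d).choose u) := by
  have r1 : s+c+u+d-(s+u) = c+d := by omega
  have r2 : s+u-u = s := by omega
  have r3 : c+d-c = d := by omega
  have r4 : s+c+u+d-(s+c) = u+d := by omega
  have r5 : s+c-s = c := by omega
  have r6 : u+d-u = d := by omega
  rw [Nat.cast_choose ℝ (by omega : s+u ≤ s+c+u+d), r1,
      Nat.cast_choose ℝ (by omega : u ≤ s+u), r2,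
      Nat.cast_choose ℝ (by omega : c ≤ c+d), r3,
      Nat.cast_choose ℝ (by omega : s+c ≤ s+c+u+d), r4,
      Nat.cast_choose ℝ (by omega : s ≤ s+c), r5,
      Nat.cast_choose ℝ (by omega : u ≤ u+d), r6]
  have h : ∀ n : ℕ, ((n ! : ℝ)) ≠ 0 := fun n => by
    exact_mod_cast Nat.factorial_ne_zero n
  field_simp

lemma binom_sum (x y : ℝ) (n : ℕ) :
    ∑ k ∈ range (n+1), (n.choose k : ℝ) * x ^ k * y ^ (n-k) = (x+y) ^ n := by
  rw [add_pow]
  exact Finset.sum_congr rfl fun k _ => by ring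

lemma row_sum (N : ℕ) (Pin Pout : ℝ) (μ ν p : ℕ → ℕ → ℝ)
    (hμ : ∀ r k, μ r k = (Nat.choose k r : ℝ) * Pout ^ r * (1 - Pout) ^ (k - r))
    (hν : ∀ m n, ν m n = (Nat.choose n m : ℝ) * Pin ^ m * (1 - Pin) ^ (n - m))
    (hp : ∀ k j, p k j =
      ∑ r ∈ Finset.Icc (k - j) (min k (N - j)), μ r k * ν (j + r - k) (N - k))
    (k : ℕ) (hk : k ≤ N) :
    ∑ j ∈ range (N+1), p k j = 1 := by
  have h1 : ∑ j ∈ range (N+1), p k j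
      = ∑ x ∈ (range (N+1)).sigma (fun j => Finset.Icc (k-j) (min k (N-j))),
          μ x.2 k * ν (x.1 + x.2 - k) (N - k) := by
    rw [Finset.sum_sigma]
    exact Finset.sum_congr rfl fun j _ => hp k j
  have h2 : ∑ x ∈ (range (N+1)).sigma (fun j => Finset.Icc (k-j) (min k (N-j))),
          μ x.2 k * ν (x.1 + x.2 - k) (N - k)
      = ∑ y ∈ range (k+1) ×ˢ range (N-k+1), μ y.1 k * ν y.2 (N - k) := by
    refine Finset.sum_nbij' (fun x => (x.2, x.1 + x.2 - k)) (fun y => ⟨y.2 + k - y.1, y.1⟩)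
      ?_ ?_ ?_ ?_ ?_
    · rintro ⟨j, r⟩ hx
      simp only [Finset.mem_sigma, Finset.mem_range, Finset.mem_Icc, le_inf_iff] at hx
      simp only [Finset.mem_product, Finset.mem_range]
      omega
    · rintro ⟨r, m⟩ hy
      simp only [Finset.mem_product, Finset.mem_range] at hy
      simp only [Finset.mem_sigma, Finset.mem_range, Finset.mem_Icc, le_inf_iff]
      omega
    · rintro ⟨j, r⟩ hx
      simp only [Finset.mem_sigma, Finset.mem_range, Finset.mem_Icc, le_inf_iff] at hx
      have h : j + r - k + k - r = j := by omega
      simp [h]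
    · rintro ⟨r, m⟩ hy
      simp only [Finset.mem_product, Finset.mem_range] at hy
      have h : m + k - r + r - k = m := by omega
      simp [h]
    · rintro ⟨j, r⟩ hx
      rfl
  have hB : ∑ m ∈ range (N-k+1), ν m (N-k) = 1 := by
    have := binom_sum Pin (1 - Pin) (N-k)
    rw [show Pin + (1 - Pin) = 1 by ring, one_pow] at this
    rw [← this]
    exact Finset.sum_congr rfl fun m _ => hν m (N-k)
  have hA : ∑ r ∈ range (k+1), μ r k = 1 := by
    have := binom_sum Pout (1 - Pout) k
    rw [show Pout + (1 - Pout) = 1 by ring, one_pow] at this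
    rw [← this]
    exact Finset.sum_congr rfl fun r _ => hμ r k
  rw [h1, h2, Finset.sum_product]
  calc ∑ x ∈ range (k+1), ∑ y ∈ range (N-k+1), μ x k * ν y (N-k)
      = ∑ x ∈ range (k+1), μ x k := by
        refine Finset.sum_congr rfl fun x _ => ?_
        rw [← Finset.mul_sum, hB, mul_one]
    _ = 1 := hA

lemma p_pos (N : ℕ) (Pin Pout : ℝ)
    (hPin : Pin ∈ Set.Ioo (0 : ℝ) 1) (hPout : Pout ∈ Set.Ioo (0 : ℝ) 1)
    (μ ν p : ℕ → ℕ → ℝ)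
    (hμ : ∀ r k, μ r k = (Nat.choose k r : ℝ) * Pout ^ r * (1 - Pout) ^ (k - r))
    (hν : ∀ m n, ν m n = (Nat.choose n m : ℝ) * Pin ^ m * (1 - Pin) ^ (n - m))
    (hp : ∀ k j, p k j =
      ∑ r ∈ Finset.Icc (k - j) (min k (N - j)), μ r k * ν (j + r - k) (N - k))
    (k j : ℕ) (hk : k ≤ N) (hj : j ≤ N) : 0 < p k j := by
  have c1 : (0:ℝ) < Pout := hPout.1
  have c2 : (0:ℝ) < 1 - Pout := by linarith [hPout.2]
  have c3 : (0:ℝ) < Pin := hPin.1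
  have c4 : (0:ℝ) < 1 - Pin := by linarith [hPin.2]
  rw [hp]
  apply Finset.sum_pos
  · intro r hr
    rw [Finset.mem_Icc, le_inf_iff] at hr
    rw [hμ, hν]
    have h1 : (0:ℝ) < (k.choose r : ℝ) := by
      exact_mod_cast Nat.choose_pos (by omega : r ≤ k)
    have h2 : (0:ℝ) < ((N-k).choose (j+r-k) : ℝ) := by
      exact_mod_cast Nat.choose_pos (by omega : j + r - k ≤ N - k)
    exact mul_pos (mul_pos (mul_pos h1 (pow_pos c1 _)) (pow_pos c2 _))
      (mul_pos (mul_pos h2 (pow_pos c3 _)) (pow_pos c4 _))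
  · exact Finset.nonempty_Icc.mpr (by omega)

lemma binom_stat (N : ℕ) (Pin Pout : ℝ)
    (hPin : Pin ∈ Set.Ioo (0 : ℝ) 1) (hPout : Pout ∈ Set.Ioo (0 : ℝ) 1)
    (μ ν p : ℕ → ℕ → ℝ) (η : ℝ)
    (hμ : ∀ r k, μ r k = (Nat.choose k r : ℝ) * Pout ^ r * (1 - Pout) ^ (k - r))
    (hν : ∀ m n, ν m n = (Nat.choose n m : ℝ) * Pin ^ m * (1 - Pin) ^ (n - m))
    (hp : ∀ k j, p k j =
      ∑ r ∈ Finset.Icc (k - j) (min k (N - j)), μ r k * ν (j + r - k) (N - k))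
    (hη : η = Pin / (Pin + Pout))
    (j : ℕ) (hj : j ≤ N) :
    ∑ k ∈ range (N+1), ((N.choose k : ℝ) * η ^ k * (1-η) ^ (N-k)) * p k j
      = (N.choose j : ℝ) * η ^ j * (1-η) ^ (N-j) := by
  have hsum : Pin + Pout ≠ 0 := by
    have := hPin.1; have := hPout.1; positivity
  have hη1 : η * (1 - Pout) + (1 - η) * Pin = η := by
    rw [hη]; field_simp; ring
  have hη2 : η * Pout + (1 - η) * (1 - Pin) = 1 - η := by
    rw [hη]; field_simp; ring
  have h1 : ∑ k ∈ range (N+1), ((N.choose k : ℝ) * η ^ k * (1-η) ^ (N-k)) * p k j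
      = ∑ x ∈ (range (N+1)).sigma (fun k => Finset.Icc (k-j) (min k (N-j))),
          ((N.choose x.1 : ℝ) * η ^ x.1 * (1-η) ^ (N-x.1)) *
            (μ x.2 x.1 * ν (j + x.2 - x.1) (N - x.1)) := by
    rw [Finset.sum_sigma]
    refine Finset.sum_congr rfl fun k _ => ?_
    rw [hp, Finset.mul_sum]
  have h2 : ∑ x ∈ (range (N+1)).sigma (fun k => Finset.Icc (k-j) (min k (N-j))),
          ((N.choose x.1 : ℝ) * η ^ x.1 * (1-η) ^ (N-x.1)) *
            (μ x.2 x.1 * ν (j + x.2 - x.1) (N - x.1))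
      = ∑ y ∈ range (j+1) ×ˢ range (N-j+1),
          ((N.choose j : ℝ) * ((j.choose y.1 : ℝ) * (η*(1-Pout)) ^ y.1 * ((1-η)*Pin) ^ (j-y.1)))
          * (((N-j).choose y.2 : ℝ) * (η*Pout) ^ y.2 * ((1-η)*(1-Pin)) ^ (N-j-y.2)) := by
    refine Finset.sum_nbij' (fun x => (x.1 - x.2, x.2)) (fun y => ⟨y.1 + y.2, y.2⟩)
      ?_ ?_ ?_ ?_ ?_
    · rintro ⟨k, r⟩ hx
      simp only [Finset.mem_sigma, Finset.mem_range, Finset.mem_Icc, le_inf_iff] at hx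
      simp only [Finset.mem_product, Finset.mem_range]
      omega
    · rintro ⟨s, u⟩ hy
      simp only [Finset.mem_product, Finset.mem_range] at hy
      simp only [Finset.mem_sigma, Finset.mem_range, Finset.mem_Icc, le_inf_iff]
      omega
    · rintro ⟨k, r⟩ hx
      simp only [Finset.mem_sigma, Finset.mem_range, Finset.mem_Icc, le_inf_iff] at hx
      have h : k - r + r = k := by omega
      simp [h]
    · rintro ⟨s, u⟩ hy
      have h : s + u - u = s := by omega
      simp [h]
    · rintro ⟨k, r⟩ hx
      simp only [Finset.mem_sigma, Finset.mem_range, Finset.mem_Icc, le_inf_iff] at hx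
      have hkN : k ≤ N := by omega
      obtain ⟨s, rfl⟩ : ∃ s, k = s + r := ⟨k - r, by omega⟩
      obtain ⟨c, rfl⟩ : ∃ c, j = s + c := ⟨j - s, by omega⟩
      obtain ⟨d, hN⟩ : ∃ d, N = s + c + r + d := ⟨N - s - c - r, by omega⟩
      rw [hμ, hν]
      simp only [show s + r - r = s by omega]
      rw [hN]
      simp only [show s + c + r - (s + r) = c by omega,
        show s + c + r + d - (s + r) = c + d by omega,
        show c + d - c = d by omega,
        show s + c + r + d - (s + c) = r + d by omega,
        show s + c - s = c by omega,
        show s + r - r = s by omega,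
        show r + d - r = d by omega]
      simp only [mul_pow]
      have key := choose4 s c r d
      linear_combination (η^s * η^r * (1-η)^c * (1-η)^d * Pout^r * (1-Pout)^s
        * Pin^c * (1-Pin)^d) * key
  rw [h1, h2, Finset.sum_product]
  have hB : ∑ u ∈ range (N-j+1),
      (((N-j).choose u : ℝ) * (η*Pout) ^ u * ((1-η)*(1-Pin)) ^ (N-j-u)) = (1-η)^(N-j) := by
    rw [binom_sum, hη2]
  have hA : ∑ s ∈ range (j+1),
      ((j.choose s : ℝ) * (η*(1-Pout)) ^ s * ((1-η)*Pin) ^ (j-s)) = η^j := by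
    rw [binom_sum, hη1]
  calc ∑ s ∈ range (j+1), ∑ u ∈ range (N-j+1),
        ((N.choose j : ℝ) * ((j.choose s : ℝ) * (η*(1-Pout)) ^ s * ((1-η)*Pin) ^ (j-s)))
          * (((N-j).choose u : ℝ) * (η*Pout) ^ u * ((1-η)*(1-Pin)) ^ (N-j-u))
      = ∑ s ∈ range (j+1),
        ((N.choose j : ℝ) * ((j.choose s : ℝ) * (η*(1-Pout)) ^ s * ((1-η)*Pin) ^ (j-s)))
          * (1-η)^(N-j) := by
        refine Finset.sum_congr rfl fun s _ => ?_
        rw [← Finset.mul_sum, hB]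
    _ = (N.choose j : ℝ) * (1-η)^(N-j) * ∑ s ∈ range (j+1),
        ((j.choose s : ℝ) * (η*(1-Pout)) ^ s * ((1-η)*Pin) ^ (j-s)) := by
        rw [Finset.mul_sum]
        exact Finset.sum_congr rfl fun s _ => by ring
    _ = (N.choose j : ℝ) * η ^ j * (1-η) ^ (N-j) := by rw [hA]; ring


/-- Theorem 1 (with uniqueness): any stationary distribution of the Markov chain of
the number of users in a small cell is the Binomial(N, P_i/(P_i+P_o)) distribution. -/
theorem stationary_is_binomial
    (N : ℕ) (hN : 0 < N) (Pin Pout : ℝ)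
    (hPin : Pin ∈ Set.Ioo (0 : ℝ) 1) (hPout : Pout ∈ Set.Ioo (0 : ℝ) 1)
    (μ ν : ℕ → ℕ → ℝ) (p : ℕ → ℕ → ℝ) (π : ℕ → ℝ) (η : ℝ)
    (hμ : ∀ r k, μ r k = (Nat.choose k r : ℝ) * Pout ^ r * (1 - Pout) ^ (k - r))
    (hν : ∀ m n, ν m n = (Nat.choose n m : ℝ) * Pin ^ m * (1 - Pin) ^ (n - m))
    (hp : ∀ k j, p k j =
      ∑ r ∈ Finset.Icc (k - j) (min k (N - j)), μ r k * ν (j + r - k) (N - k))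
    (hπnonneg : ∀ j, 0 ≤ π j)
    (hπsum : ∑ j ∈ Finset.range (N + 1), π j = 1)
    (hstat : ∀ j ≤ N, ∑ k ∈ Finset.range (N + 1), π k * p k j = π j)
    (hη : η = Pin / (Pin + Pout)) :
    ∀ j ≤ N, π j = (Nat.choose N j : ℝ) * η ^ j * (1 - η) ^ (N - j) := by
  set b : ℕ → ℝ := fun k => (Nat.choose N k : ℝ) * η ^ k * (1 - η) ^ (N - k) with hb
  set d : ℕ → ℝ := fun k => π k - b k with hd
  have hbstat : ∀ j ≤ N, ∑ k ∈ Finset.range (N + 1), b k * p k j = b j :=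
    fun j hj => binom_stat N Pin Pout hPin hPout μ ν p η hμ hν hp hη j hj
  have hrow : ∀ k ≤ N, ∑ j ∈ Finset.range (N + 1), p k j = 1 :=
    fun k hk => row_sum N Pin Pout μ ν p hμ hν hp k hk
  have hppos : ∀ k j, k ≤ N → j ≤ N → 0 < p k j :=
    fun k j hk hj => p_pos N Pin Pout hPin hPout μ ν p hμ hν hp k j hk hj
  have hbsum : ∑ j ∈ Finset.range (N + 1), b j = 1 := by
    have := binom_sum η (1 - η) N
    rw [show η + (1 - η) = 1 by ring, one_pow] at this
    exact this
  have hdstat : ∀ j ≤ N, ∑ k ∈ Finset.range (N + 1), d k * p k j = d j := by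
    intro j hj
    simp only [hd, sub_mul, Finset.sum_sub_distrib, hstat j hj, hbstat j hj]
  have hdsum : ∑ j ∈ Finset.range (N + 1), d j = 0 := by
    simp only [hd, Finset.sum_sub_distrib, hπsum, hbsum, sub_self]
  have hle : ∀ j ∈ Finset.range (N + 1),
      |d j| ≤ ∑ k ∈ Finset.range (N + 1), |d k| * p k j := by
    intro j hj
    rw [Finset.mem_range] at hj
    rw [← hdstat j (by omega)]
    calc |∑ k ∈ Finset.range (N + 1), d k * p k j|
        ≤ ∑ k ∈ Finset.range (N + 1), |d k * p k j| := Finset.abs_sum_le_sum_abs _ _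
      _ = ∑ k ∈ Finset.range (N + 1), |d k| * p k j := by
          refine Finset.sum_congr rfl fun k hk => ?_
          rw [Finset.mem_range] at hk
          rw [abs_mul, abs_of_pos (hppos k j (by omega) (by omega))]
  have htot : ∑ j ∈ Finset.range (N + 1), ∑ k ∈ Finset.range (N + 1), |d k| * p k j
      = ∑ j ∈ Finset.range (N + 1), |d j| := by
    rw [Finset.sum_comm]
    refine Finset.sum_congr rfl fun k hk => ?_
    rw [Finset.mem_range] at hk
    rw [← Finset.mul_sum, hrow k (by omega), mul_one]
  have hzero : ∑ j ∈ Finset.range (N + 1),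
      ((∑ k ∈ Finset.range (N + 1), |d k| * p k j) - |d j|) = 0 := by
    rw [Finset.sum_sub_distrib, htot, sub_self]
  have heach := (Finset.sum_eq_zero_iff_of_nonneg
    (fun j hj => sub_nonneg.mpr (hle j hj))).mp hzero
  have heq0 : ∑ k ∈ Finset.range (N + 1), |d k| * p k 0 = |d 0| := by
    have := heach 0 (Finset.mem_range.mpr (by omega))
    linarith [this]
  have habs : ∑ k ∈ Finset.range (N + 1), |d k * p k 0|
      = |∑ k ∈ Finset.range (N + 1), d k * p k 0| := by
    rw [hdstat 0 (by omega), ← heq0]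
    refine Finset.sum_congr rfl fun k hk => ?_
    rw [Finset.mem_range] at hk
    rw [abs_mul, abs_of_pos (hppos k 0 (by omega) (by omega))]
  have hdzero : ∀ k ∈ Finset.range (N + 1), d k = 0 := by
    rcases le_or_gt 0 (∑ k ∈ Finset.range (N + 1), d k * p k 0) with hpos | hneg
    · have h0 : ∑ k ∈ Finset.range (N + 1), (|d k * p k 0| - d k * p k 0) = 0 := by
        rw [Finset.sum_sub_distrib, habs, abs_of_nonneg hpos, sub_self]
      have hterm := (Finset.sum_eq_zero_iff_of_nonneg
        (fun k _ => sub_nonneg.mpr (le_abs_self _))).mp h0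
      have hdk : ∀ k ∈ Finset.range (N + 1), 0 ≤ d k := by
        intro k hk
        have h1 := hterm k hk
        rw [Finset.mem_range] at hk
        have h2 : 0 ≤ d k * p k 0 := by
          have := abs_nonneg (d k * p k 0); linarith
        by_contra hc
        push_neg at hc
        nlinarith [hppos k 0 (by omega) (by omega)]
      exact (Finset.sum_eq_zero_iff_of_nonneg hdk).mp hdsum
    · have h0 : ∑ k ∈ Finset.range (N + 1), (|d k * p k 0| + d k * p k 0) = 0 := by
        rw [Finset.sum_add_distrib, habs, abs_of_neg hneg]; ring
      have hterm := (Finset.sum_eq_zero_iff_of_nonneg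
        (fun k _ => by linarith [neg_abs_le (d k * p k 0)])).mp h0
      have hdk : ∀ k ∈ Finset.range (N + 1), 0 ≤ -d k := by
        intro k hk
        have h1 := hterm k hk
        rw [Finset.mem_range] at hk
        have h2 : d k * p k 0 ≤ 0 := by
          have := abs_nonneg (d k * p k 0); linarith
        by_contra hc
        push_neg at hc
        nlinarith [hppos k 0 (by omega) (by omega)]
      have hnegsum : ∑ k ∈ Finset.range (N + 1), -d k = 0 := by
        rw [Finset.sum_neg_distrib, hdsum, neg_zero]
      have hall := (Finset.sum_eq_zero_iff_of_nonneg hdk).mp hnegsum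
      intro k hk
      have := hall k hk
      linarith
  intro j hj
  have hz := hdzero j (Finset.mem_range.mpr (by omega))
  rw [hd] at hz
  simp only at hz
  have hpb : π j = b j := by linarith
  rw [hpb, hb]
end

section
/- Let N be a positive integer, P_i, P_o ∈ (0,1), μ(r,k) = C(k,r) P_o^r (1−P_o)^(k−r), ν(m,n) = C(n,m) P_i^m (1−P_i)^(n−m), and p_{kj} = Σ_{r = max(0, k−j)}^{min(k, N−j)} μ(r,k) ν(j+r−k, N−k). If π = (π_0,…,π_N) is a probability vector satisfying Σ_{k=0}^N π_k p_{kj} = π_j for all j, then its mean is Σ_{j=0}^N j·π_j = N·P_i/(P_i+P_o) and its variance is Σ_{j=0}^N j²·π_j − (Σ_{j=0}^N j·π_j)² = N·P_i·P_o/(P_i+P_o)². -/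
open Finset

lemma binom_sum0 (n : ℕ) (x y : ℝ) :
    ∑ m ∈ range (n+1), (n.choose m : ℝ) * x^m * y^(n-m) = (x+y)^n := by
  rw [add_pow]
  exact Finset.sum_congr rfl fun m _ => by ring

lemma binom_sum1 (n : ℕ) (x y : ℝ) :
    ∑ m ∈ range (n+1), (m:ℝ) * ((n.choose m : ℝ) * x^m * y^(n-m))
      = n * x * (x+y)^(n-1) := by
  cases n with
  | zero => simp
  | succ n =>
    rw [Finset.sum_range_succ']
    have key : ∀ m ∈ range (n+1),
        ((m+1 : ℕ):ℝ) * (((n+1).choose (m+1) : ℝ) * x^(m+1) * y^(n+1-(m+1)))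
        = ((n:ℝ)+1) * x * ((n.choose m : ℝ) * x^m * y^(n-m)) := by
      intro m _
      have h : (n+1) * n.choose m = (n+1).choose (m+1) * (m+1) := Nat.add_one_mul_choose_eq n m
      have h' : ((n:ℝ)+1) * (n.choose m : ℝ) = ((n+1).choose (m+1) : ℝ) * ((m:ℝ)+1) := by
        exact_mod_cast h
      simp only [Nat.succ_sub_succ]
      push_cast
      linear_combination (-(x^(m+1) * y^(n-m))) * h'
    rw [Finset.sum_congr rfl key, ← Finset.mul_sum, binom_sum0]
    push_cast
    simp [Nat.succ_sub_one]

lemma binom_sum2 (n : ℕ) (x y : ℝ) :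
    ∑ m ∈ range (n+1), (m:ℝ) * ((m:ℝ)-1) * ((n.choose m : ℝ) * x^m * y^(n-m))
      = n * ((n:ℝ)-1) * x^2 * (x+y)^(n-2) := by
  cases n with
  | zero => simp
  | succ n =>
    rw [Finset.sum_range_succ']
    have key : ∀ m ∈ range (n+1),
        ((m+1 : ℕ):ℝ) * (((m+1 : ℕ):ℝ)-1) * (((n+1).choose (m+1) : ℝ) * x^(m+1) * y^(n+1-(m+1)))
        = ((n:ℝ)+1) * x * ((m:ℝ) * ((n.choose m : ℝ) * x^m * y^(n-m))) := by
      intro m _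
      have h : (n+1) * n.choose m = (n+1).choose (m+1) * (m+1) := Nat.add_one_mul_choose_eq n m
      have h' : ((n:ℝ)+1) * (n.choose m : ℝ) = ((n+1).choose (m+1) : ℝ) * ((m:ℝ)+1) := by
        exact_mod_cast h
      simp only [Nat.succ_sub_succ]
      push_cast
      linear_combination (-((m:ℝ) * x^(m+1) * y^(n-m))) * h'
    rw [Finset.sum_congr rfl key, ← Finset.mul_sum, binom_sum1]
    push_cast
    simp [Nat.succ_sub_succ]
    ring

lemma bmoments (n : ℕ) (q : ℝ) (w : ℕ → ℝ)
    (hw : ∀ m, w m = (n.choose m : ℝ) * q^m * (1-q)^(n-m)) :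
    (∑ m ∈ range (n+1), w m = 1) ∧
    (∑ m ∈ range (n+1), (m:ℝ) * w m = n*q) ∧
    (∑ m ∈ range (n+1), (m:ℝ)^2 * w m = n*q*(1-q) + (n*q)^2) := by
  have h0 := binom_sum0 n q (1-q)
  have h1 := binom_sum1 n q (1-q)
  have h2 := binom_sum2 n q (1-q)
  rw [show q + (1-q) = 1 by ring, one_pow] at h0 h1 h2
  refine ⟨by simp_rw [hw]; exact h0, by simp_rw [hw]; linarith [h1], ?_⟩
  have key : ∀ m ∈ range (n+1), (m:ℝ)^2 * w m
      = (m:ℝ)*((m:ℝ)-1)*((n.choose m:ℝ)*q^m*(1-q)^(n-m))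
        + (m:ℝ)*((n.choose m:ℝ)*q^m*(1-q)^(n-m)) := by
    intro m _; rw [hw]; ring
  rw [Finset.sum_congr rfl key, Finset.sum_add_distrib, h2, h1]
  ring

lemma reindex (N k : ℕ) (hk : k ≤ N) (μ ν : ℕ → ℕ → ℝ) (p : ℕ → ℕ → ℝ)
    (hp : ∀ k j, p k j =
      ∑ r ∈ Finset.Icc (k - j) (min k (N - j)), μ r k * ν (j + r - k) (N - k))
    (f : ℕ → ℝ) :
    ∑ j ∈ range (N+1), f j * p k j
    = ∑ r ∈ range (k+1), ∑ m ∈ range (N-k+1), f (k-r+m) * (μ r k * ν m (N-k)) := by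
  simp only [hp, Finset.mul_sum]
  rw [Finset.sum_sigma', Finset.sum_sigma']
  refine Finset.sum_nbij' (fun x => ⟨x.2, x.1 + x.2 - k⟩) (fun x => ⟨k - x.1 + x.2, x.1⟩)
    ?_ ?_ ?_ ?_ ?_
  · rintro ⟨j, r⟩ hx
    simp only [Finset.mem_sigma, Finset.mem_range, Finset.mem_Icc, le_min_iff] at hx ⊢
    omega
  · rintro ⟨r, m⟩ hx
    simp only [Finset.mem_sigma, Finset.mem_range, Finset.mem_Icc, le_min_iff] at hx ⊢
    omega
  · rintro ⟨j, r⟩ hx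
    simp only [Finset.mem_sigma, Finset.mem_range, Finset.mem_Icc, le_min_iff] at hx
    ext <;> simp <;> omega
  · rintro ⟨r, m⟩ hx
    simp only [Finset.mem_sigma, Finset.mem_range, Finset.mem_Icc, le_min_iff] at hx
    ext <;> simp <;> omega
  · rintro ⟨j, r⟩ hx
    simp only [Finset.mem_sigma, Finset.mem_range, Finset.mem_Icc, le_min_iff] at hx
    have h1 : k - r + (j + r - k) = j := by omega
    simp only [h1]

lemma cond_moments (N k : ℕ) (hk : k ≤ N) (Pin Pout : ℝ)
    (μ ν : ℕ → ℕ → ℝ) (p : ℕ → ℕ → ℝ)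
    (hμ : ∀ r k, μ r k = (Nat.choose k r : ℝ) * Pout ^ r * (1 - Pout) ^ (k - r))
    (hν : ∀ m n, ν m n = (Nat.choose n m : ℝ) * Pin ^ m * (1 - Pin) ^ (n - m))
    (hp : ∀ k j, p k j =
      ∑ r ∈ Finset.Icc (k - j) (min k (N - j)), μ r k * ν (j + r - k) (N - k)) :
    (∑ j ∈ range (N+1), (j:ℝ) * p k j = (1-Pout)*k + Pin*((N:ℝ)-k)) ∧
    (∑ j ∈ range (N+1), (j:ℝ)^2 * p k j
      = (k:ℝ)*Pout*(1-Pout) + ((N:ℝ)-k)*Pin*(1-Pin)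
        + ((1-Pout)*(k:ℝ) + ((N:ℝ)-k)*Pin)^2) := by
  have hKc : ((N-k : ℕ):ℝ) = (N:ℝ) - k := by
    rw [Nat.cast_sub hk]
  obtain ⟨hμ0, hμ1, hμ2⟩ := bmoments k Pout (fun r => μ r k) (fun r => hμ r k)
  obtain ⟨hν0, hν1, hν2⟩ := bmoments (N-k) Pin (fun m => ν m (N-k)) (fun m => hν m (N-k))
  constructor
  · rw [reindex N k hk μ ν p hp (fun j => (j:ℝ))]
    have step : ∀ r ∈ range (k+1),
        ∑ m ∈ range (N-k+1), ((k-r+m : ℕ):ℝ) * (μ r k * ν m (N-k))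
        = (((k:ℝ) + ((N-k:ℕ):ℝ)*Pin) * μ r k - (r:ℝ) * μ r k) := by
      intro r hr
      rw [Finset.mem_range, Nat.lt_succ_iff] at hr
      have inner : ∀ m ∈ range (N-k+1),
          ((k-r+m : ℕ):ℝ) * (μ r k * ν m (N-k))
          = ((k:ℝ) - r) * μ r k * ν m (N-k) + μ r k * ((m:ℝ) * ν m (N-k)) := by
        intro m _
        rw [Nat.cast_add, Nat.cast_sub hr]
        ring
      rw [Finset.sum_congr rfl inner, Finset.sum_add_distrib, ← Finset.mul_sum,
        ← Finset.mul_sum, hν0, hν1]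
      ring
    rw [Finset.sum_congr rfl step, Finset.sum_sub_distrib, ← Finset.mul_sum, hμ0, hμ1, hKc]
    ring
  · rw [reindex N k hk μ ν p hp (fun j => (j:ℝ)^2)]
    have step : ∀ r ∈ range (k+1),
        ∑ m ∈ range (N-k+1), ((k-r+m : ℕ):ℝ)^2 * (μ r k * ν m (N-k))
        = ((((k:ℝ) + ((N-k:ℕ):ℝ)*Pin)^2 + ((N-k:ℕ):ℝ)*Pin*(1-Pin)) * μ r k
            + (r:ℝ)^2 * μ r k)
          - 2*((k:ℝ) + ((N-k:ℕ):ℝ)*Pin)*((r:ℝ) * μ r k) := by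
      intro r hr
      rw [Finset.mem_range, Nat.lt_succ_iff] at hr
      have inner : ∀ m ∈ range (N-k+1),
          ((k-r+m : ℕ):ℝ)^2 * (μ r k * ν m (N-k))
          = ((k:ℝ) - r)^2 * μ r k * ν m (N-k)
            + 2*((k:ℝ)-r) * μ r k * ((m:ℝ) * ν m (N-k))
            + μ r k * ((m:ℝ)^2 * ν m (N-k)) := by
        intro m _
        rw [Nat.cast_add, Nat.cast_sub hr]
        ring
      rw [Finset.sum_congr rfl inner, Finset.sum_add_distrib, Finset.sum_add_distrib,
        ← Finset.mul_sum, ← Finset.mul_sum, ← Finset.mul_sum, hν0, hν1, hν2]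
      ring
    rw [Finset.sum_congr rfl step, Finset.sum_sub_distrib, Finset.sum_add_distrib,
      ← Finset.mul_sum, ← Finset.mul_sum, hμ0, hμ1, hμ2, hKc]
    ring

/-- Proposition 3: the mean and variance of the stationary number of users in a small
cell are `N P_i/(P_i+P_o)` and `N P_i P_o/(P_i+P_o)²` respectively. -/
theorem stationary_mean_and_variance
    (N : ℕ) (hN : 0 < N) (Pin Pout : ℝ)
    (hPin : Pin ∈ Set.Ioo (0 : ℝ) 1) (hPout : Pout ∈ Set.Ioo (0 : ℝ) 1)
    (μ ν : ℕ → ℕ → ℝ) (p : ℕ → ℕ → ℝ) (π : ℕ → ℝ)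
    (hμ : ∀ r k, μ r k = (Nat.choose k r : ℝ) * Pout ^ r * (1 - Pout) ^ (k - r))
    (hν : ∀ m n, ν m n = (Nat.choose n m : ℝ) * Pin ^ m * (1 - Pin) ^ (n - m))
    (hp : ∀ k j, p k j =
      ∑ r ∈ Finset.Icc (k - j) (min k (N - j)), μ r k * ν (j + r - k) (N - k))
    (hπnonneg : ∀ j, 0 ≤ π j)
    (hπsum : ∑ j ∈ Finset.range (N + 1), π j = 1)
    (hstat : ∀ j ≤ N, ∑ k ∈ Finset.range (N + 1), π k * p k j = π j) :
    (∑ j ∈ Finset.range (N + 1), (j : ℝ) * π j = N * Pin / (Pin + Pout)) ∧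
    (∑ j ∈ Finset.range (N + 1), (j : ℝ) ^ 2 * π j
        - (∑ j ∈ Finset.range (N + 1), (j : ℝ) * π j) ^ 2
      = N * Pin * Pout / (Pin + Pout) ^ 2) := by
  obtain ⟨hPin0, hPin1⟩ := hPin
  obtain ⟨hPout0, hPout1⟩ := hPout
  have hs : Pin + Pout ≠ 0 := ne_of_gt (by linarith)
  have h2s : (2 - Pin - Pout) ≠ 0 := ne_of_gt (by linarith)
  set m1 := ∑ j ∈ Finset.range (N + 1), (j : ℝ) * π j with hm1def
  set m2 := ∑ j ∈ Finset.range (N + 1), (j : ℝ) ^ 2 * π j with hm2def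
  have swap : ∀ f : ℕ → ℝ, ∑ j ∈ range (N+1), f j * π j
      = ∑ k ∈ range (N+1), π k * ∑ j ∈ range (N+1), f j * p k j := by
    intro f
    calc ∑ j ∈ range (N+1), f j * π j
        = ∑ j ∈ range (N+1), f j * ∑ k ∈ range (N+1), π k * p k j := by
          refine Finset.sum_congr rfl fun j hj => ?_
          rw [hstat j (Nat.lt_succ_iff.mp (Finset.mem_range.mp hj))]
      _ = ∑ j ∈ range (N+1), ∑ k ∈ range (N+1), π k * (f j * p k j) := by
          refine Finset.sum_congr rfl fun j _ => ?_
          rw [Finset.mul_sum]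
          exact Finset.sum_congr rfl fun k _ => by ring
      _ = ∑ k ∈ range (N+1), ∑ j ∈ range (N+1), π k * (f j * p k j) := Finset.sum_comm
      _ = ∑ k ∈ range (N+1), π k * ∑ j ∈ range (N+1), f j * p k j := by
          exact Finset.sum_congr rfl fun k _ => (Finset.mul_sum _ _ _).symm
  -- first moment
  have hm1lin : m1 = (1-Pout-Pin)*m1 + (N:ℝ)*Pin := by
    conv_lhs => rw [hm1def, swap (fun j => (j:ℝ))]
    have step : ∀ k ∈ range (N+1),
        π k * ∑ j ∈ range (N+1), (j:ℝ) * p k j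
        = (1-Pout-Pin)*((k:ℝ)*π k) + (N:ℝ)*Pin*π k := by
      intro k hk
      rw [(cond_moments N k (Nat.lt_succ_iff.mp (Finset.mem_range.mp hk)) Pin Pout μ ν p hμ hν hp).1]
      ring
    rw [Finset.sum_congr rfl step, Finset.sum_add_distrib, ← Finset.mul_sum,
      ← Finset.mul_sum, hπsum, ← hm1def]
    ring
  have key1 : m1 * (Pin + Pout) = N * Pin := by linear_combination hm1lin
  have hm1 : m1 = N * Pin / (Pin + Pout) := by
    rw [eq_div_iff hs]; exact key1
  -- second moment
  have hm2lin : m2 = ((N:ℝ)*Pin*(1-Pin) + ((N:ℝ)*Pin)^2)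
      + (Pout*(1-Pout) - Pin*(1-Pin) + 2*(N:ℝ)*Pin*(1-Pout-Pin))*m1
      + (1-Pout-Pin)^2*m2 := by
    conv_lhs => rw [hm2def, swap (fun j => (j:ℝ)^2)]
    have step : ∀ k ∈ range (N+1),
        π k * ∑ j ∈ range (N+1), (j:ℝ)^2 * p k j
        = ((N:ℝ)*Pin*(1-Pin) + ((N:ℝ)*Pin)^2)*π k
          + (Pout*(1-Pout) - Pin*(1-Pin) + 2*(N:ℝ)*Pin*(1-Pout-Pin))*((k:ℝ)*π k)
          + (1-Pout-Pin)^2*((k:ℝ)^2*π k) := by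
      intro k hk
      rw [(cond_moments N k (Nat.lt_succ_iff.mp (Finset.mem_range.mp hk)) Pin Pout μ ν p hμ hν hp).2]
      ring
    rw [Finset.sum_congr rfl step, Finset.sum_add_distrib, Finset.sum_add_distrib,
      ← Finset.mul_sum, ← Finset.mul_sum, ← Finset.mul_sum, hπsum, ← hm1def, ← hm2def]
    ring
  have key2 : m2 * ((Pin+Pout)*(2-Pin-Pout))
      = ((N:ℝ)*Pin*(1-Pin) + ((N:ℝ)*Pin)^2)
        + (Pout*(1-Pout) - Pin*(1-Pin) + 2*(N:ℝ)*Pin*(1-Pout-Pin))*(N*Pin/(Pin+Pout)) := by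
    rw [← hm1]
    linear_combination hm2lin
  have hm2 : m2 = (((N:ℝ)*Pin*(1-Pin) + ((N:ℝ)*Pin)^2)
        + (Pout*(1-Pout) - Pin*(1-Pin) + 2*(N:ℝ)*Pin*(1-Pout-Pin))*(N*Pin/(Pin+Pout)))
      / ((Pin+Pout)*(2-Pin-Pout)) := by
    rw [eq_div_iff (mul_ne_zero hs h2s)]; exact key2
  refine ⟨hm1, ?_⟩
  rw [hm2, hm1]
  field_simp
  ring
end

section
/- Let 1 < R < R_I. Then (i) for β > 2: (R_I^{β−2} − 1) / ((R_I² − 1)) > (R_I^{β−2} − R^{β−2}) / (R^{β−2} · (R_I² − R²)), and (ii) for β > 1: (R_I^{2β−2} − 1) / ((R_I² − 1)) > (R_I^{2β−2} − R^{2β−2}) / (R^{2β−2} · (R_I² − R²)). -/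
open Real

lemma key_ineq (R RI : ℝ) (hR : 1 < R) (hRRI : R < RI) (α : ℝ) (hα : 0 < α) :
    (RI ^ α - R ^ α) * (R ^ 2 - 1) < (R ^ α - 1) * RI ^ α * (RI ^ 2 - R ^ 2) := by
  have hR0 : (0:ℝ) < R := by linarith
  have hRI0 : (0:ℝ) < RI := by linarith
  have hRI1 : (1:ℝ) < RI := by linarith
  set p := α / 2 with hp
  have hp0 : 0 < p := by positivity
  have ha1 : 1 < R ^ α := Real.one_lt_rpow_iff_of_pos hR0 |>.2 (Or.inl ⟨hR, hα⟩)
  have hb1 : 1 < RI ^ α := Real.one_lt_rpow_iff_of_pos hRI0 |>.2 (Or.inl ⟨hRI1, hα⟩)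
  have hab : R ^ α < RI ^ α := Real.rpow_lt_rpow (le_of_lt hR0) hRRI hα
  have hR2 : (1:ℝ) < R ^ 2 := by nlinarith
  have hRI2 : R ^ 2 < RI ^ 2 := by nlinarith
  have hR20 : (0:ℝ) < R ^ 2 := by positivity
  have hRI20 : (0:ℝ) < RI ^ 2 := by positivity
  set a := R ^ α with hadef
  set b := RI ^ α with hbdef
  have ha0 : (0:ℝ) < a := by linarith
  have hb0 : (0:ℝ) < b := by linarith
  have hsqR : (R ^ 2 : ℝ) ^ p = a := by
    rw [hadef, ← Real.rpow_natCast R 2, ← Real.rpow_mul (le_of_lt hR0)]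
    norm_num [hp]
    ring_nf
  have hsqRI : (RI ^ 2 : ℝ) ^ p = b := by
    rw [hbdef, ← Real.rpow_natCast RI 2, ← Real.rpow_mul (le_of_lt hRI0)]
    norm_num [hp]
    ring_nf
  rcases le_or_gt p 1 with hple | hpgt
  · -- Fact A : p * a * (R²−1) ≤ (a−1) * R²
    have hA : p * a * (R ^ 2 - 1) ≤ (a - 1) * R ^ 2 := by
      have hs : (-1:ℝ) ≤ 1 / R ^ 2 - 1 := by
        have : 0 < 1 / R ^ 2 := by positivity
        linarith
      have h := rpow_one_add_le_one_add_mul_self hs (le_of_lt hp0) hple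
      have h1 : (1 + (1 / R ^ 2 - 1)) ^ p = 1 / a := by
        rw [show (1:ℝ) + (1 / R ^ 2 - 1) = (R ^ 2)⁻¹ by field_simp; ring,
          Real.inv_rpow (le_of_lt hR20), hsqR, one_div]
      rw [h1, div_le_iff₀ ha0] at h
      -- h : 1 ≤ (1 + p * (1/R² - 1)) * a
      have h5 : R ^ 2 ≤ (1 + p * (1 / R ^ 2 - 1)) * a * R ^ 2 := by
        have := mul_le_mul_of_nonneg_right h (le_of_lt hR20); linarith
      have h6 : (1 + p * (1 / R ^ 2 - 1)) * a * R ^ 2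
          = a * R ^ 2 + p * a - p * a * R ^ 2 := by field_simp; ring
      rw [h6] at h5; linarith
    -- Fact B : (b−a) * R² ≤ p * a * (RI²−R²)
    have hB : (b - a) * R ^ 2 ≤ p * a * (RI ^ 2 - R ^ 2) := by
      have hs : (-1:ℝ) ≤ RI ^ 2 / R ^ 2 - 1 := by
        have : 0 < RI ^ 2 / R ^ 2 := by positivity
        linarith
      have h := rpow_one_add_le_one_add_mul_self hs (le_of_lt hp0) hple
      have h1 : (1 + (RI ^ 2 / R ^ 2 - 1)) ^ p = b / a := by
        rw [show (1:ℝ) + (RI ^ 2 / R ^ 2 - 1) = RI ^ 2 / R ^ 2 by ring,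
          Real.div_rpow (le_of_lt hRI20) (le_of_lt hR20), hsqR, hsqRI]
      rw [h1, div_le_iff₀ ha0] at h
      have h5 : b * R ^ 2 ≤ (1 + p * (RI ^ 2 / R ^ 2 - 1)) * a * R ^ 2 :=
        mul_le_mul_of_nonneg_right h (le_of_lt hR20)
      have h6 : (1 + p * (RI ^ 2 / R ^ 2 - 1)) * a * R ^ 2
          = a * R ^ 2 + p * a * RI ^ 2 - p * a * R ^ 2 := by field_simp; ring
      rw [h6] at h5; linarith
    have h7 : (b - a) * R ^ 2 * (R ^ 2 - 1) ≤ (a - 1) * R ^ 2 * (RI ^ 2 - R ^ 2) := by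
      nlinarith [mul_le_mul_of_nonneg_right hB (by linarith : (0:ℝ) ≤ R ^ 2 - 1),
        mul_le_mul_of_nonneg_right hA (by linarith : (0:ℝ) ≤ RI ^ 2 - R ^ 2)]
    nlinarith [h7, hR20, mul_pos (mul_pos (mul_pos (by linarith : (0:ℝ) < a - 1)
      (by linarith : (0:ℝ) < RI ^ 2 - R ^ 2)) (by linarith : (0:ℝ) < b - 1)) hR20]
  · -- p ≥ 1 case
    have hA : p * (R ^ 2 - 1) ≤ a - 1 := by
      have h := one_add_mul_self_le_rpow_one_add (by linarith : (-1:ℝ) ≤ R ^ 2 - 1) (le_of_lt hpgt)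
      rw [show (1:ℝ) + (R ^ 2 - 1) = R ^ 2 by ring, hsqR] at h
      linarith
    have hB : (b - a) * RI ^ 2 ≤ p * b * (RI ^ 2 - R ^ 2) := by
      have hs : (-1:ℝ) ≤ R ^ 2 / RI ^ 2 - 1 := by
        have : 0 < R ^ 2 / RI ^ 2 := by positivity
        linarith
      have h := one_add_mul_self_le_rpow_one_add hs (le_of_lt hpgt)
      have h1 : (1 + (R ^ 2 / RI ^ 2 - 1)) ^ p = a / b := by
        rw [show (1:ℝ) + (R ^ 2 / RI ^ 2 - 1) = R ^ 2 / RI ^ 2 by ring,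
          Real.div_rpow (le_of_lt hR20) (le_of_lt hRI20), hsqR, hsqRI]
      rw [h1, le_div_iff₀ hb0] at h
      have h5 : (1 + p * (R ^ 2 / RI ^ 2 - 1)) * b * RI ^ 2 ≤ a * RI ^ 2 :=
        mul_le_mul_of_nonneg_right h (le_of_lt hRI20)
      have h6 : (1 + p * (R ^ 2 / RI ^ 2 - 1)) * b * RI ^ 2
          = b * RI ^ 2 + p * b * R ^ 2 - p * b * RI ^ 2 := by field_simp; ring
      rw [h6] at h5; linarith
    have hRI21 : (1:ℝ) < RI ^ 2 := by nlinarith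
    have h7 : (b - a) * RI ^ 2 * (R ^ 2 - 1) ≤ (a - 1) * b * (RI ^ 2 - R ^ 2) := by
      nlinarith [mul_le_mul_of_nonneg_right hB (by linarith : (0:ℝ) ≤ R ^ 2 - 1),
        mul_le_mul_of_nonneg_right hA
          (le_of_lt (mul_pos hb0 (by linarith : (0:ℝ) < RI ^ 2 - R ^ 2)))]
    have hX : (0:ℝ) < (b - a) * (R ^ 2 - 1) * (RI ^ 2 - 1) :=
      mul_pos (mul_pos (by linarith) (by linarith)) (by linarith)
    linarith [h7, hX]

lemma main_ineq (R RI : ℝ) (hR : 1 < R) (hRRI : R < RI) (α : ℝ) (hα : 0 < α) :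
    (RI ^ α - 1) / (RI ^ 2 - 1)
      > (RI ^ α - R ^ α) / (R ^ α * (RI ^ 2 - R ^ 2)) := by
  have hR0 : (0:ℝ) < R := by linarith
  have hRI1 : (1:ℝ) < RI := by linarith
  have ha1 : 1 < R ^ α := Real.one_lt_rpow_iff_of_pos hR0 |>.2 (Or.inl ⟨hR, hα⟩)
  have hRI2 : R ^ 2 < RI ^ 2 := by nlinarith
  have hR2 : (1:ℝ) < R ^ 2 := by nlinarith
  have key := key_ineq R RI hR hRRI α hα
  rw [gt_iff_lt, div_lt_div_iff₀ (by nlinarith) (by nlinarith)]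
  nlinarith [key]

/-- Section V comparison: a CSG femto cell suffers a strictly larger mean interference
(and second moment) from a uniform interferer in the disk `[1, R_I]` than an OSG femto
cell does from a uniform interferer in the ring `[R, R_I]` (common positive prefactors
cancelled). -/
theorem csg_interference_exceeds_osg
    (R RI : ℝ) (hR : 1 < R) (hRRI : R < RI) :
    (∀ β : ℝ, 2 < β →
      (RI ^ (β - 2) - 1) / (RI ^ 2 - 1)
        > (RI ^ (β - 2) - R ^ (β - 2)) / (R ^ (β - 2) * (RI ^ 2 - R ^ 2))) ∧
    (∀ β : ℝ, 1 < β →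
      (RI ^ (2 * β - 2) - 1) / (RI ^ 2 - 1)
        > (RI ^ (2 * β - 2) - R ^ (2 * β - 2))
            / (R ^ (2 * β - 2) * (RI ^ 2 - R ^ 2))) := by
  exact ⟨fun β hβ => main_ineq R RI hR hRRI (β - 2) (by linarith),
    fun β hβ => main_ineq R RI hR hRRI (2 * β - 2) (by linarith)⟩
end

section
/- Let 0 < R < R_I, P_t^m > 0, P_γ > 0, and let a be a real number with a < R². Let γ be a random variable with exponential density (1/P_γ)e^{−x/P_γ} on [0,∞), and let d be an independent random variable with density f_d(y) = 2y/(R_I² − R²) on [R, R_I]. Then, writing s = a/(P_t^m P_γ), E[exp(s · γ P_t^m / d²)] = 1 + (a / (R_I² − R²)) · ln((R_I² − a)/(R² − a)). -/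
open MeasureTheory ProbabilityTheory Real Filter Set

lemma aux_exp_neg_integral_Ioi {b : ℝ} (hb : 0 < b) :
    ∫ x in Set.Ioi (0:ℝ), Real.exp (-b * x) = 1 / b := by
  have hd : ∀ x ∈ Set.Ioi (0:ℝ),
      HasDerivAt (fun x => -Real.exp (-b*x)/b) (Real.exp (-b*x)) x := by
    intro x _
    have h0 : HasDerivAt (fun x : ℝ => -b*x) (-b) x := by
      simpa using (hasDerivAt_id x).const_mul (-b)
    have h1 := (h0.exp.neg).div_const b
    refine h1.congr_deriv ?_
    field_simp
  have ht : Tendsto (fun x => -Real.exp (-b*x)/b) atTop (nhds 0) := by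
    have h2 : Tendsto (fun x : ℝ => -b*x) atTop atBot :=
      tendsto_id.const_mul_atTop_of_neg (neg_neg_iff_pos.mpr hb)
    have h3 : Tendsto (fun x : ℝ => Real.exp (-b*x)) atTop (nhds 0) :=
      tendsto_exp_atBot.comp h2
    have := (h3.neg).div_const b
    simpa using this
  have hc : ContinuousWithinAt (fun x => -Real.exp (-b*x)/b) (Set.Ici 0) 0 :=
    (Continuous.continuousWithinAt (by continuity))
  have := integral_Ioi_of_hasDerivAt_of_tendsto
    (f := fun x => -Real.exp (-b*x)/b) (f' := fun x => Real.exp (-b*x))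
    hc hd (exp_neg_integrableOn_Ioi 0 hb) ht
  rw [this]
  simp
  ring

/-- Inner integral: exponential MGF. -/
lemma aux_inner {Pγ c : ℝ} (hPγ : 0 < Pγ) (hc : c * Pγ < 1) :
    (∫⁻ x, ENNReal.ofReal (Real.exp (c * x))
      ∂(volume.withDensity
        (fun x => ENNReal.ofReal (if 0 ≤ x then (1 / Pγ) * Real.exp (-x / Pγ) else 0))))
      = ENNReal.ofReal (1 / (1 - c * Pγ)) := by
  have hb : 0 < 1/Pγ - c := by
    rw [sub_pos]
    exact (lt_div_iff₀ hPγ).mpr hc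
  set b := 1/Pγ - c with hbdef
  have hρ : Measurable (fun x : ℝ =>
      ENNReal.ofReal (if 0 ≤ x then (1 / Pγ) * Real.exp (-x / Pγ) else 0)) := by
    apply Measurable.ennreal_ofReal
    apply Measurable.ite measurableSet_Ici <;> fun_prop
  rw [lintegral_withDensity_eq_lintegral_mul _ hρ (by fun_prop)]
  have hh : ∀ x : ℝ,
      (ENNReal.ofReal (if 0 ≤ x then (1 / Pγ) * Real.exp (-x / Pγ) else 0) *
        ENNReal.ofReal (Real.exp (c * x)))
      = ENNReal.ofReal (Set.indicator (Set.Ici 0)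
          (fun x => (1/Pγ) * Real.exp (-b * x)) x) := by
    intro x
    rw [← ENNReal.ofReal_mul (by positivity)]
    congr 1
    by_cases hx : (0:ℝ) ≤ x
    · rw [if_pos hx, Set.indicator_of_mem (Set.mem_Ici.mpr hx)]
      rw [mul_assoc, ← Real.exp_add]
      congr 2
      rw [hbdef]
      field_simp
      ring
    · rw [if_neg hx, Set.indicator_of_notMem (by simpa using hx), zero_mul]
  simp only [Pi.mul_apply, hh]
  have hint : Integrable (Set.indicator (Set.Ici (0:ℝ))
      (fun x => (1/Pγ) * Real.exp (-b * x))) := by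
    apply IntegrableOn.integrable_indicator _ measurableSet_Ici
    rw [integrableOn_Ici_iff_integrableOn_Ioi]
    exact (exp_neg_integrableOn_Ioi 0 hb).const_mul _
  rw [← ofReal_integral_eq_lintegral_ofReal hint]
  · congr 1
    rw [integral_indicator measurableSet_Ici, integral_Ici_eq_integral_Ioi,
      integral_const_mul, aux_exp_neg_integral_Ioi hb]
    rw [hbdef]
    field_simp
  · refine Filter.Eventually.of_forall fun x => ?_
    apply Set.indicator_nonneg
    intro x _
    positivity

lemma aux_outer {R RI a : ℝ} (hR : 0 < R) (hRRI : R < RI) (ha : a < R^2) :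
    ∫ y in R..RI, (2*y/(RI^2-R^2) * (y^2/(y^2-a)))
      = 1 + a/(RI^2-R^2) * Real.log ((RI^2-a)/(R^2-a)) := by
  have hA : 0 < RI^2 - R^2 := by nlinarith
  have hpos : ∀ y ∈ Set.uIcc R RI, 0 < y^2 - a := by
    intro y hy
    rw [Set.uIcc_of_le hRRI.le] at hy
    nlinarith [hy.1, hy.2]
  have hderiv : ∀ y ∈ Set.uIcc R RI,
      HasDerivAt (fun y => (y^2 + a * Real.log (y^2 - a)) / (RI^2-R^2))
        (2*y/(RI^2-R^2) * (y^2/(y^2-a))) y := by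
    intro y hy
    have hy2 : (0:ℝ) < y^2 - a := hpos y hy
    have h1 : HasDerivAt (fun y : ℝ => y^2) (2*y) y := by
      simpa using hasDerivAt_pow 2 y
    have h2 : HasDerivAt (fun y : ℝ => y^2 - a) (2*y) y := h1.sub_const a
    have h3 : HasDerivAt (fun y : ℝ => Real.log (y^2 - a)) (2*y/(y^2-a)) y :=
      h2.log hy2.ne'
    have h4 := (h1.add (h3.const_mul a)).div_const (RI^2-R^2)
    refine h4.congr_deriv ?_
    field_simp
    ring
  have hcont : ContinuousOn (fun y => 2*y/(RI^2-R^2) * (y^2/(y^2-a))) (Set.uIcc R RI) := by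
    apply ContinuousOn.mul (by fun_prop)
    exact ContinuousOn.div (by fun_prop) (by fun_prop) (fun y hy => (hpos y hy).ne')
  rw [intervalIntegral.integral_eq_sub_of_hasDerivAt hderiv (hcont.intervalIntegrable)]
  have h5 : (0:ℝ) < RI^2 - a := by nlinarith
  have h6 : (0:ℝ) < R^2 - a := by nlinarith
  rw [Real.log_div h5.ne' h6.ne']
  field_simp
  ring

/-- Closed form of the single-interferer MGF for an OSG femto cell with path-loss
exponent `β = 2`: with Rayleigh fading gain `γ` (exponential, mean `P_γ`) independent
of the distance `d` uniformly distributed in the ring `[R, R_I]` (density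
`2y/(R_I²−R²)`), and `s = a/(P_t^m P_γ)` with `a < R²`,
`E[exp(s γ P_t^m/d²)] = 1 + (a/(R_I²−R²)) ln((R_I²−a)/(R²−a))`. -/
theorem osg_single_interferer_mgf_beta_two
    {Ω : Type*} [MeasurableSpace Ω] (P : Measure Ω) [IsProbabilityMeasure P]
    (R RI Ptm Pγ a : ℝ) (hR : 0 < R) (hRRI : R < RI)
    (hPtm : 0 < Ptm) (hPγ : 0 < Pγ) (ha : a < R ^ 2)
    (g : Ω → ℝ) (hgmeas : Measurable g)
    (hglaw : Measure.map g P = volume.withDensity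
      (fun x => ENNReal.ofReal (if 0 ≤ x then (1 / Pγ) * Real.exp (-x / Pγ) else 0)))
    (d : Ω → ℝ) (hdmeas : Measurable d)
    (hdlaw : Measure.map d P = volume.withDensity
      (fun y => ENNReal.ofReal
        (if y ∈ Set.Icc R RI then 2 * y / (RI ^ 2 - R ^ 2) else 0)))
    (hindep : IndepFun g d P)
    (s : ℝ) (hs : s = a / (Ptm * Pγ)) :
    (∫ ω, Real.exp (s * (g ω * Ptm / (d ω) ^ 2)) ∂P)
      = 1 + a / (RI ^ 2 - R ^ 2) * Real.log ((RI ^ 2 - a) / (R ^ 2 - a)) := by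
  have hA : (0:ℝ) < RI ^ 2 - R ^ 2 := by nlinarith
  haveI : IsProbabilityMeasure (Measure.map g P) :=
    Measure.isProbabilityMeasure_map hgmeas.aemeasurable
  haveI : IsProbabilityMeasure (Measure.map d P) :=
    Measure.isProbabilityMeasure_map hdmeas.aemeasurable
  have hFmeas : Measurable (fun p : ℝ × ℝ => Real.exp (s * (p.1 * Ptm / p.2 ^ 2))) := by
    fun_prop
  have hmap : Measure.map (fun ω => (g ω, d ω)) P
      = (Measure.map g P).prod (Measure.map d P) :=
    (indepFun_iff_map_prod_eq_prod_map_map hgmeas.aemeasurable hdmeas.aemeasurable).mp hindep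
  have h1 : (∫ ω, Real.exp (s * (g ω * Ptm / (d ω) ^ 2)) ∂P)
      = ∫ p : ℝ × ℝ, Real.exp (s * (p.1 * Ptm / p.2 ^ 2))
          ∂((Measure.map g P).prod (Measure.map d P)) := by
    rw [← hmap, integral_map (hgmeas.prodMk hdmeas).aemeasurable
      hFmeas.aestronglyMeasurable]
  rw [h1, integral_eq_lintegral_of_nonneg_ae
    (ae_of_all _ fun p => (Real.exp_pos _).le) hFmeas.aestronglyMeasurable,
    lintegral_prod_symm _ hFmeas.ennreal_ofReal.aemeasurable]
  have hImeas : Measurable (fun y : ℝ =>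
      ∫⁻ x, ENNReal.ofReal (Real.exp (s * (x * Ptm / y ^ 2))) ∂(Measure.map g P)) :=
    Measurable.lintegral_prod_left hFmeas.ennreal_ofReal
  have hρd : Measurable (fun y : ℝ => ENNReal.ofReal
      (if y ∈ Set.Icc R RI then 2 * y / (RI ^ 2 - R ^ 2) else 0)) := by
    apply Measurable.ennreal_ofReal
    apply Measurable.ite measurableSet_Icc <;> fun_prop
  rw [hdlaw, lintegral_withDensity_eq_lintegral_mul _ hρd hImeas]
  simp only [Pi.mul_apply]
  have hpt : ∀ y : ℝ,
      ENNReal.ofReal (if y ∈ Set.Icc R RI then 2 * y / (RI ^ 2 - R ^ 2) else 0) *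
        (∫⁻ x, ENNReal.ofReal (Real.exp (s * (x * Ptm / y ^ 2))) ∂(Measure.map g P))
      = Set.indicator (Set.Icc R RI)
          (fun y => ENNReal.ofReal (2 * y / (RI ^ 2 - R ^ 2) * (y ^ 2 / (y ^ 2 - a)))) y := by
    intro y
    by_cases hy : y ∈ Set.Icc R RI
    · rw [if_pos hy, Set.indicator_of_mem hy]
      have hy0 : 0 < y := lt_of_lt_of_le hR hy.1
      have hya : a < y ^ 2 := lt_of_lt_of_le ha (by nlinarith [hy.1])
      have hcP : (s * Ptm / y ^ 2) * Pγ = a / y ^ 2 := by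
        rw [hs]; field_simp
      have hcy : (s * Ptm / y ^ 2) * Pγ < 1 := by
        rw [hcP]
        exact (div_lt_one (by positivity)).mpr hya
      have heq : (fun x : ℝ => ENNReal.ofReal (Real.exp (s * (x * Ptm / y ^ 2))))
          = fun x => ENNReal.ofReal (Real.exp ((s * Ptm / y ^ 2) * x)) := by
        funext x; congr 2; ring
      rw [hglaw, heq, aux_inner hPγ hcy, hcP,
        ← ENNReal.ofReal_mul (by positivity)]
      congr 1
      rw [show (1:ℝ) - a / y ^ 2 = (y ^ 2 - a) / y ^ 2 by field_simp]
      field_simp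
    · rw [if_neg hy, Set.indicator_of_notMem hy]
      simp
  rw [lintegral_congr hpt, lintegral_indicator measurableSet_Icc]
  have hφnn : ∀ y ∈ Set.Icc R RI, 0 ≤ 2 * y / (RI ^ 2 - R ^ 2) * (y ^ 2 / (y ^ 2 - a)) := by
    intro y hy
    have hy0 : 0 < y := lt_of_lt_of_le hR hy.1
    have hya : a < y ^ 2 := lt_of_lt_of_le ha (by nlinarith [hy.1])
    have : 0 < y ^ 2 - a := by linarith
    positivity
  have hφint : IntegrableOn
      (fun y => 2 * y / (RI ^ 2 - R ^ 2) * (y ^ 2 / (y ^ 2 - a))) (Set.Icc R RI) := by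
    apply ContinuousOn.integrableOn_Icc
    apply ContinuousOn.mul (by fun_prop)
    apply ContinuousOn.div (by fun_prop) (by fun_prop)
    intro y hy
    have hya : a < y ^ 2 := lt_of_lt_of_le ha (by nlinarith [hy.1, hR])
    linarith
  rw [← ofReal_integral_eq_lintegral_ofReal hφint
    ((ae_restrict_iff' measurableSet_Icc).mpr (ae_of_all _ hφnn)),
    ENNReal.toReal_ofReal (setIntegral_nonneg measurableSet_Icc hφnn),
    MeasureTheory.integral_Icc_eq_integral_Ioc,
    ← intervalIntegral.integral_of_le hRRI.le]
  exact aux_outer hR hRRI ha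
end

section
/- Let 0 < R < R_I, P_t^m > 0, P_γ > 0, and let a be a real number with 0 < a < R⁴. Let γ be a random variable with exponential density (1/P_γ)e^{−x/P_γ} on [0,∞), and let d be an independent random variable with density f_d(y) = 2y/(R_I² − R²) on [R, R_I]. Then, writing s = a/(P_t^m P_γ), E[exp(s · γ P_t^m / d⁴)] = 1 + (√a / (2(R_I² − R²))) · ln(((R_I² − √a)(R² + √a)) / ((R_I² + √a)(R² − √a))). -/
open MeasureTheory ProbabilityTheory Real Filter Set

lemma exp_integral_aux {b : ℝ} (hb : 0 < b) :
    ∫ x in Set.Ioi (0:ℝ), Real.exp (-(b * x)) = 1 / b := by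
  have hderiv : ∀ x ∈ Set.Ici (0:ℝ),
      HasDerivAt (fun x => -(1/b) * Real.exp (-(b*x))) (Real.exp (-(b*x))) x := by
    intro x _
    have h1 : HasDerivAt (fun x : ℝ => -(b*x)) (-b) x := by
      simpa using ((hasDerivAt_id x).const_mul (-b))
    have := (h1.exp).const_mul (-(1/b))
    refine this.congr_deriv ?_
    field_simp
  have htend : Tendsto (fun x => -(1/b) * Real.exp (-(b*x))) atTop (nhds 0) := by
    have h1 : Tendsto (fun x : ℝ => -(b*x)) atTop atBot := by
      have := (tendsto_id.const_mul_atTop hb (f := fun x : ℝ => id x))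
      exact tendsto_neg_atTop_atBot.comp this
    have h2 := Real.tendsto_exp_atBot.comp h1
    simpa using h2.const_mul (-(1/b))
  have hint : IntegrableOn (fun x => Real.exp (-(b*x))) (Set.Ioi (0:ℝ)) := by
    simpa [neg_mul] using exp_neg_integrableOn_Ioi 0 hb
  have := integral_Ioi_of_hasDerivAt_of_tendsto' hderiv hint htend
  simpa using this

lemma fg_meas (Pγ : ℝ) : Measurable (fun x : ℝ => if 0 ≤ x then (1 / Pγ) * Real.exp (-x / Pγ) else 0) := by
  exact Measurable.ite measurableSet_Ici (by fun_prop) measurable_const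

lemma fg_nonneg (Pγ : ℝ) (hPγ : 0 < Pγ) (x : ℝ) :
    0 ≤ (if 0 ≤ x then (1 / Pγ) * Real.exp (-x / Pγ) else 0) := by
  split <;> positivity

lemma gain_indicator (Pγ c : ℝ) :
    (fun x : ℝ => (if 0 ≤ x then (1 / Pγ) * Real.exp (-x / Pγ) else 0) * Real.exp (c * x))
      = Set.indicator (Set.Ici 0) (fun x => (1/Pγ) * Real.exp (-((1/Pγ - c) * x))) := by
  funext x
  simp only [Set.indicator, Set.mem_Ici]
  split_ifs with h
  · rw [mul_assoc, ← Real.exp_add]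
    congr 1
    field_simp
    ring
  · simp

lemma gain_integrableOn {Pγ c : ℝ} (hPγ : 0 < Pγ) (hc : c < 1/Pγ) :
    MeasureTheory.IntegrableOn (fun x : ℝ => (1/Pγ) * Real.exp (-((1/Pγ - c) * x))) (Set.Ici 0) := by
  rw [integrableOn_Ici_iff_integrableOn_Ioi]
  have hb : 0 < 1/Pγ - c := by linarith
  have h := (exp_neg_integrableOn_Ioi 0 hb).const_mul (1/Pγ)
  exact h.congr (Filter.Eventually.of_forall fun x => by simp only [neg_mul])

lemma gain_integrable {Pγ c : ℝ} (hPγ : 0 < Pγ) (hc : c < 1/Pγ) :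
    MeasureTheory.Integrable (fun x => Real.exp (c * x))
      (volume.withDensity (fun x => ENNReal.ofReal (if 0 ≤ x then (1 / Pγ) * Real.exp (-x / Pγ) else 0))) := by
  rw [integrable_withDensity_iff ((fg_meas Pγ).ennreal_ofReal)
    (Filter.Eventually.of_forall fun x => ENNReal.ofReal_lt_top)]
  have : (fun x : ℝ => Real.exp (c * x) * (ENNReal.ofReal (if 0 ≤ x then (1 / Pγ) * Real.exp (-x / Pγ) else 0)).toReal)
      = Set.indicator (Set.Ici 0) (fun x => (1/Pγ) * Real.exp (-((1/Pγ - c) * x))) := by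
    rw [← gain_indicator Pγ c]
    funext x
    rw [ENNReal.toReal_ofReal (fg_nonneg Pγ hPγ x), mul_comm]
  rw [this]
  exact (gain_integrableOn hPγ hc).integrable_indicator measurableSet_Ici

lemma gain_mgf {Pγ c : ℝ} (hPγ : 0 < Pγ) (hc : c < 1/Pγ) :
    ∫ x, Real.exp (c * x)
      ∂(volume.withDensity (fun x => ENNReal.ofReal (if 0 ≤ x then (1 / Pγ) * Real.exp (-x / Pγ) else 0)))
    = 1 / (1 - c * Pγ) := by
  have hrw : (fun x : ℝ => ENNReal.ofReal (if 0 ≤ x then (1 / Pγ) * Real.exp (-x / Pγ) else 0))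
      = fun x => ((Real.toNNReal (if 0 ≤ x then (1 / Pγ) * Real.exp (-x / Pγ) else 0) : NNReal) : ENNReal) := rfl
  rw [hrw, integral_withDensity_eq_integral_smul
    (f := fun x => Real.toNNReal (if 0 ≤ x then (1 / Pγ) * Real.exp (-x / Pγ) else 0))
    ((fg_meas Pγ).real_toNNReal)]
  have h2 : (fun x : ℝ => Real.toNNReal (if 0 ≤ x then (1 / Pγ) * Real.exp (-x / Pγ) else 0) • Real.exp (c * x))
      = Set.indicator (Set.Ici 0) (fun x => (1/Pγ) * Real.exp (-((1/Pγ - c) * x))) := by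
    rw [← gain_indicator Pγ c]
    funext x
    rw [NNReal.smul_def, Real.coe_toNNReal _ (fg_nonneg Pγ hPγ x), smul_eq_mul]
  rw [h2, integral_indicator measurableSet_Ici, MeasureTheory.integral_Ici_eq_integral_Ioi,
    MeasureTheory.integral_const_mul]
  have hb : 0 < 1/Pγ - c := by linarith
  rw [exp_integral_aux hb]
  have h1 : Pγ ≠ 0 := ne_of_gt hPγ
  rw [div_mul_div_comm, one_mul, show Pγ * (1/Pγ - c) = 1 - c * Pγ from by field_simp]

lemma sqrt_lt_sq {R a : ℝ} (hR : 0 < R) (ha0 : 0 < a) (ha : a < R^4) : Real.sqrt a < R^2 := by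
  have : Real.sqrt a < Real.sqrt (R^4) := Real.sqrt_lt_sqrt ha0.le ha
  rwa [show (R:ℝ)^4 = (R^2)^2 by ring, Real.sqrt_sq (by positivity)] at this

lemma ftc_aux {R RI a : ℝ} (hR : 0 < R) (hRRI : R < RI) (ha0 : 0 < a) (ha : a < R^4) :
    ∫ y in R..RI, 2*y^5/(y^4 - a)
      = (RI^2 + Real.sqrt a/2 * (Real.log (RI^2 - Real.sqrt a) - Real.log (RI^2 + Real.sqrt a)))
        - (R^2 + Real.sqrt a/2 * (Real.log (R^2 - Real.sqrt a) - Real.log (R^2 + Real.sqrt a))) := by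
  set t := Real.sqrt a with htdef
  have ht0 : 0 < t := Real.sqrt_pos.mpr ha0
  have ht2 : t^2 = a := Real.sq_sqrt ha0.le
  have htR : t < R^2 := sqrt_lt_sq hR ha0 ha
  have key : ∀ y ∈ Set.uIcc R RI,
      HasDerivAt (fun y => y^2 + t/2 * (Real.log (y^2 - t) - Real.log (y^2 + t)))
        (2*y^5/(y^4 - a)) y := by
    intro y hy
    rw [Set.uIcc_of_le hRRI.le] at hy
    have hyR : R ≤ y := hy.1
    have hy0 : 0 < y := lt_of_lt_of_le hR hyR
    have hyt : t < y^2 := lt_of_lt_of_le htR (by nlinarith)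
    have hd1 : y^2 - t ≠ 0 := by nlinarith
    have hd2 : y^2 + t ≠ 0 := by nlinarith
    have hd3 : y^4 - a ≠ 0 := by nlinarith
    have h1 : HasDerivAt (fun y : ℝ => y^2) (2*y) y := by
      simpa using hasDerivAt_pow 2 y
    have h3 : HasDerivAt (fun y : ℝ => Real.log (y^2 - t)) (2*y/(y^2 - t)) y :=
      (h1.sub_const t).log hd1
    have h4 : HasDerivAt (fun y : ℝ => Real.log (y^2 + t)) (2*y/(y^2 + t)) y :=
      (h1.add_const t).log hd2
    have h5 := h1.add ((h3.sub h4).const_mul (t/2))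
    refine h5.congr_deriv ?_
    rw [← ht2]
    have hd3' : y^4 - t^2 ≠ 0 := by nlinarith
    field_simp
    ring
  have hcont : IntervalIntegrable (fun y => 2*y^5/(y^4 - a)) volume R RI := by
    apply ContinuousOn.intervalIntegrable
    apply ContinuousOn.div (by fun_prop) (by fun_prop)
    intro y hy
    rw [Set.uIcc_of_le hRRI.le] at hy
    have hyt : t < y^2 := lt_of_lt_of_le htR (by nlinarith [hy.1, hR])
    nlinarith
  simpa using intervalIntegral.integral_eq_sub_of_hasDerivAt key hcont


set_option maxHeartbeats 1000000 in
/-- Closed form of the single-interferer MGF for an OSG femto cell with path-loss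
exponent `β = 4`: with Rayleigh fading gain `γ` (exponential, mean `P_γ`) independent
of the distance `d` uniformly distributed in the ring `[R, R_I]` (density
`2y/(R_I²−R²)`), and `s = a/(P_t^m P_γ)` with `0 < a < R⁴`,
`E[exp(s γ P_t^m/d⁴)] = 1 + (√a/(2(R_I²−R²))) ln(((R_I²−√a)(R²+√a))/((R_I²+√a)(R²−√a)))`. -/
theorem osg_single_interferer_mgf_beta_four
    {Ω : Type*} [MeasurableSpace Ω] (P : Measure Ω) [IsProbabilityMeasure P]
    (R RI Ptm Pγ a : ℝ) (hR : 0 < R) (hRRI : R < RI)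
    (hPtm : 0 < Ptm) (hPγ : 0 < Pγ) (ha0 : 0 < a) (ha : a < R ^ 4)
    (g : Ω → ℝ) (hgmeas : Measurable g)
    (hglaw : Measure.map g P = volume.withDensity
      (fun x => ENNReal.ofReal (if 0 ≤ x then (1 / Pγ) * Real.exp (-x / Pγ) else 0)))
    (d : Ω → ℝ) (hdmeas : Measurable d)
    (hdlaw : Measure.map d P = volume.withDensity
      (fun y => ENNReal.ofReal
        (if y ∈ Set.Icc R RI then 2 * y / (RI ^ 2 - R ^ 2) else 0)))
    (hindep : IndepFun g d P)
    (s : ℝ) (hs : s = a / (Ptm * Pγ)) :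
    (∫ ω, Real.exp (s * (g ω * Ptm / (d ω) ^ 4)) ∂P)
      = 1 + Real.sqrt a / (2 * (RI ^ 2 - R ^ 2))
          * Real.log ((RI ^ 2 - Real.sqrt a) * (R ^ 2 + Real.sqrt a)
              / ((RI ^ 2 + Real.sqrt a) * (R ^ 2 - Real.sqrt a))) := by
  have hC : 0 < RI ^ 2 - R ^ 2 := by nlinarith
  set μg := volume.withDensity
      (fun x => ENNReal.ofReal (if 0 ≤ x then (1 / Pγ) * Real.exp (-x / Pγ) else 0)) with hμgdef
  set μd := volume.withDensity
      (fun y => ENNReal.ofReal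
        (if y ∈ Set.Icc R RI then 2 * y / (RI ^ 2 - R ^ 2) else 0)) with hμddef
  haveI hPg : IsProbabilityMeasure μg := hglaw ▸ Measure.isProbabilityMeasure_map hgmeas.aemeasurable
  haveI hPd : IsProbabilityMeasure μd := hdlaw ▸ Measure.isProbabilityMeasure_map hdmeas.aemeasurable
  -- measurability of the integrand on the product space
  have hφ : Measurable (fun p : ℝ × ℝ => Real.exp (s * (p.2 * Ptm / p.1 ^ 4))) := by
    fun_prop
  -- joint law
  have hpair : Measure.map (fun ω => (d ω, g ω)) P = μd.prod μg := by
    rw [← hdlaw, ← hglaw]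
    exact (indepFun_iff_map_prod_eq_prod_map_map hdmeas.aemeasurable
      hgmeas.aemeasurable).mp hindep.symm
  have step1 : (∫ ω, Real.exp (s * (g ω * Ptm / (d ω) ^ 4)) ∂P)
      = ∫ p : ℝ × ℝ, Real.exp (s * (p.2 * Ptm / p.1 ^ 4)) ∂(μd.prod μg) := by
    rw [← hpair,
      integral_map (hdmeas.aemeasurable.prodMk hgmeas.aemeasurable) hφ.aestronglyMeasurable]
  -- inner value for y in the ring
  have hkey : ∀ y ∈ Set.Icc R RI,
      (∫ x, Real.exp (s * (x * Ptm / y ^ 4)) ∂μg) = y ^ 4 / (y ^ 4 - a) := by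
    intro y hy
    have hy0 : 0 < y := lt_of_lt_of_le hR hy.1
    have hy4 : a < y ^ 4 := lt_of_lt_of_le ha (pow_le_pow_left₀ hR.le hy.1 4)
    have hsPtm : s * Ptm = a / Pγ := by rw [hs]; field_simp
    have hc : s * Ptm / y ^ 4 < 1 / Pγ := by
      rw [hsPtm, div_div, div_lt_div_iff₀ (by positivity) hPγ]
      nlinarith
    have heq : (fun x : ℝ => Real.exp (s * (x * Ptm / y ^ 4)))
        = fun x => Real.exp ((s * Ptm / y ^ 4) * x) := by
      funext x; congr 1; ring
    rw [heq, hμgdef, gain_mgf hPγ hc]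
    have h1 : (s * Ptm / y ^ 4) * Pγ = a / y ^ 4 := by
      rw [hsPtm]; field_simp
    rw [h1]
    rw [show (1 : ℝ) - a / y ^ 4 = (y ^ 4 - a) / y ^ 4 by field_simp]
    rw [one_div_div]
  -- a.e. support of the distance law
  have hae : ∀ᵐ y ∂μd, y ∈ Set.Icc R RI := by
    rw [ae_iff]
    show μd ((Set.Icc R RI)ᶜ) = 0
    rw [hμddef, withDensity_apply _ (measurableSet_Icc (a := R) (b := RI)).compl]
    have h0 : ∀ y ∈ (Set.Icc R RI)ᶜ,
        ENNReal.ofReal (if y ∈ Set.Icc R RI then 2 * y / (RI ^ 2 - R ^ 2) else 0)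
          = (0 : ENNReal) := by
      intro y hy
      rw [if_neg (Set.mem_compl_iff _ _ |>.mp hy), ENNReal.ofReal_zero]
    rw [setLIntegral_congr_fun measurableSet_Icc.compl h0, lintegral_zero]
  -- integrability on the product
  have hbound : ∀ y ∈ Set.Icc R RI, y ^ 4 / (y ^ 4 - a) ≤ R ^ 4 / (R ^ 4 - a) := by
    intro y hy
    have hy4 : R ^ 4 ≤ y ^ 4 := pow_le_pow_left₀ hR.le hy.1 4
    rw [div_le_div_iff₀ (by nlinarith) (by nlinarith)]
    nlinarith
  have hint : Integrable (fun p : ℝ × ℝ => Real.exp (s * (p.2 * Ptm / p.1 ^ 4)))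
      (μd.prod μg) := by
    rw [integrable_prod_iff hφ.aestronglyMeasurable]
    constructor
    · filter_upwards [hae] with y hy
      have hy0 : 0 < y := lt_of_lt_of_le hR hy.1
      have hy4 : a < y ^ 4 := lt_of_lt_of_le ha (pow_le_pow_left₀ hR.le hy.1 4)
      have hsPtm : s * Ptm = a / Pγ := by rw [hs]; field_simp
      have hc : s * Ptm / y ^ 4 < 1 / Pγ := by
        rw [hsPtm, div_div, div_lt_div_iff₀ (by positivity) hPγ]
        nlinarith
      have heq : (fun x : ℝ => Real.exp ((s * Ptm / y ^ 4) * x))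
          = fun x => Real.exp (s * (x * Ptm / y ^ 4)) := by
        funext x; congr 1; ring
      rw [hμgdef, ← heq]
      exact gain_integrable hPγ hc
    · apply Integrable.mono' (integrable_const (R ^ 4 / (R ^ 4 - a)))
      · exact hφ.norm.aestronglyMeasurable.integral_prod_right'
      · filter_upwards [hae] with y hy
        have hy0 : 0 < y := lt_of_lt_of_le hR hy.1
        have hy4 : a < y ^ 4 := lt_of_lt_of_le ha (pow_le_pow_left₀ hR.le hy.1 4)
        have habs : (fun x => ‖Real.exp (s * (x * Ptm / y ^ 4))‖)
            = fun x => Real.exp (s * (x * Ptm / y ^ 4)) := by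
          funext x; rw [Real.norm_eq_abs, Real.abs_exp]
        rw [show (∫ x, ‖Real.exp (s * (x * Ptm / y ^ 4))‖ ∂μg)
            = ∫ x, Real.exp (s * (x * Ptm / y ^ 4)) ∂μg from by rw [habs],
          hkey y hy, Real.norm_eq_abs,
          abs_of_pos (div_pos (by positivity) (by linarith))]
        exact hbound y hy
  -- Fubini and reduction to a one-dimensional integral
  rw [step1, MeasureTheory.integral_prod _ hint]
  have e1 : (∫ y, (∫ x, Real.exp (s * (x * Ptm / y ^ 4)) ∂μg) ∂μd)
      = ∫ y, y ^ 4 / (y ^ 4 - a) ∂μd := by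
    apply integral_congr_ae
    filter_upwards [hae] with y hy
    exact hkey y hy
  rw [e1]
  -- unfold the distance density
  have hfd_meas : Measurable
      (fun y : ℝ => if y ∈ Set.Icc R RI then 2 * y / (RI ^ 2 - R ^ 2) else 0) :=
    Measurable.ite measurableSet_Icc (by fun_prop) measurable_const
  have hrwd : (fun y : ℝ => ENNReal.ofReal (if y ∈ Set.Icc R RI then 2 * y / (RI ^ 2 - R ^ 2) else 0))
      = fun y => ((Real.toNNReal (if y ∈ Set.Icc R RI then 2 * y / (RI ^ 2 - R ^ 2) else 0) : NNReal) : ENNReal) := rfl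
  rw [hμddef, hrwd,
    integral_withDensity_eq_integral_smul
      (f := fun y => Real.toNNReal (if y ∈ Set.Icc R RI then 2 * y / (RI ^ 2 - R ^ 2) else 0))
      hfd_meas.real_toNNReal]
  have e2 : (fun y : ℝ =>
        Real.toNNReal (if y ∈ Set.Icc R RI then 2 * y / (RI ^ 2 - R ^ 2) else 0)
          • (y ^ 4 / (y ^ 4 - a)))
      = Set.indicator (Set.Icc R RI)
          (fun y => 2 * y / (RI ^ 2 - R ^ 2) * (y ^ 4 / (y ^ 4 - a))) := by
    funext y
    simp only [Set.indicator]
    split_ifs with h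
    · rw [NNReal.smul_def, Real.coe_toNNReal _ (div_nonneg (by nlinarith [h.1]) hC.le),
        smul_eq_mul]
    · simp
  rw [e2, integral_indicator measurableSet_Icc, MeasureTheory.integral_Icc_eq_integral_Ioc,
    ← intervalIntegral.integral_of_le hRRI.le]
  have e3 : (∫ y in R..RI, 2 * y / (RI ^ 2 - R ^ 2) * (y ^ 4 / (y ^ 4 - a)))
      = ∫ y in R..RI, (1 / (RI ^ 2 - R ^ 2)) * (2 * y ^ 5 / (y ^ 4 - a)) := by
    apply intervalIntegral.integral_congr
    intro y _
    show 2 * y / (RI ^ 2 - R ^ 2) * (y ^ 4 / (y ^ 4 - a))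
        = 1 / (RI ^ 2 - R ^ 2) * (2 * y ^ 5 / (y ^ 4 - a))
    rw [div_mul_div_comm, div_mul_div_comm]
    congr 1
    ring
  rw [e3, intervalIntegral.integral_const_mul, ftc_aux hR hRRI ha0 ha]
  -- final algebra
  set t := Real.sqrt a with htdef
  have ht0 : 0 < t := Real.sqrt_pos.mpr ha0
  have htR : t < R ^ 2 := sqrt_lt_sq hR ha0 ha
  have h1 : RI ^ 2 - t > 0 := by nlinarith
  have h2 : RI ^ 2 + t > 0 := by nlinarith
  have h3 : R ^ 2 - t > 0 := by nlinarith
  have h4 : R ^ 2 + t > 0 := by nlinarith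
  rw [Real.log_div (by positivity) (by positivity),
    Real.log_mul (ne_of_gt h1) (ne_of_gt h4),
    Real.log_mul (ne_of_gt h2) (ne_of_gt h3)]
  field_simp
  ring
end
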